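/- arXiv:1106.6206 — 9 statements merged into one kernel-verified Lean document; each statement's English description precedes it below -/
import Mathlib

section
/- Let q ≥ 2 and m ≥ 1 be integers and let C ⊆ Q^m be a nonempty code with distance enumerator polynomial B(x). Then for every real x with 0 < x ≤ 1 and every δ with 0 ≤ δ ≤ 1, one has α_q(δ) ≥ (1/m)·log_q(|C|/B(x)) + δ·log_q x. -/
open Finset

/-- `minDistGE q n d C` : any two distinct codewords of `C ⊆ Q^n` have Hamming
distance at least `d`. -/
def minDistGE (q n d : ℕ) (C : Finset (Fin n → Fin q)) : Prop :=
  ∀ u ∈ C, ∀ v ∈ C, u ≠ v → d ≤ hammingDist u v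

/-- `Aq q n d` : maximum cardinality of a `q`-ary code of length `n` with minimum
Hamming distance at least `d`. -/
noncomputable def Aq (q n d : ℕ) : ℕ :=
  sSup {k : ℕ | ∃ C : Finset (Fin n → Fin q), minDistGE q n d C ∧ C.card = k}

/-- `alphaQ q δ = limsup_{n→∞} (1/n)·log_q A_q(n, ⌈δn⌉)`. -/
noncomputable def alphaQ (q : ℕ) (δ : ℝ) : ℝ :=
  Filter.limsup (fun n : ℕ => Real.logb q (Aq q n ⌈δ * (n : ℝ)⌉₊) / n) Filter.atTop

/-- The distance enumerator polynomial `B(x) = Σ_j B_j x^j` of a code `C ⊆ Q^m`,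
where `B_j = (1/|C|)·|{(u,v) ∈ C×C : d(u,v) = j}|`, evaluated at `x`. -/
noncomputable def distEnum (q m : ℕ) (C : Finset (Fin m → Fin q)) (x : ℝ) : ℝ :=
  (C.card : ℝ)⁻¹ * ∑ p ∈ C ×ˢ C, x ^ hammingDist p.1 p.2

section pieces
variable (q m N : ℕ)

noncomputable def flat (u : Fin N → Fin m → Fin q) : Fin (m * N) → Fin q :=
  fun k => u (finProdFinEquiv.symm k).2 (finProdFinEquiv.symm k).1

lemma flat_inj : Function.Injective (flat q m N) := by
  intro u v h
  funext j i
  have := congrFun h (finProdFinEquiv (i, j))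
  simpa [flat] using this

lemma hammingDist_flat (u v : Fin N → Fin m → Fin q) :
    hammingDist (flat q m N u) (flat q m N v) = ∑ j, hammingDist (u j) (v j) := by
  unfold hammingDist flat
  rw [Finset.card_equiv finProdFinEquiv.symm (t := Finset.univ.filter
      (fun p : Fin m × Fin N => u p.2 p.1 ≠ v p.2 p.1)) (fun k => by simp)]
  rw [Finset.card_filter, ← Finset.univ_product_univ, Finset.sum_product_right]
  exact Finset.sum_congr rfl fun j _ => (Finset.card_filter _ _).symm

lemma enum_pow (x : ℝ) (C : Finset (Fin m → Fin q)) :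
    ∑ p ∈ (Fintype.piFinset fun _ : Fin N => C) ×ˢ (Fintype.piFinset fun _ : Fin N => C),
      x ^ (∑ j, hammingDist (p.1 j) (p.2 j))
    = (∑ p ∈ C ×ˢ C, x ^ hammingDist p.1 p.2) ^ N := by
  rw [← Fin.prod_const N (∑ p ∈ C ×ˢ C, x ^ hammingDist p.1 p.2), Finset.prod_univ_sum]
  refine Finset.sum_nbij' (fun p (j : Fin N) => (p.1 j, p.2 j))
    (fun w => (fun j => (w j).1, fun j => (w j).2)) ?_ ?_ ?_ ?_ ?_
  · intro p hp
    simp only [Finset.mem_product, Fintype.mem_piFinset] at hp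
    simp only [Fintype.mem_piFinset, Finset.mem_product]
    exact fun j => ⟨hp.1 j, hp.2 j⟩
  · intro w hw
    simp only [Fintype.mem_piFinset, Finset.mem_product] at hw
    simp only [Finset.mem_product, Fintype.mem_piFinset]
    exact ⟨fun j => (hw j).1, fun j => (hw j).2⟩
  · intro p hp; rfl
  · intro w hw; rfl
  · intro p hp
    exact (Finset.prod_pow_eq_pow_sum _ _ _).symm

lemma greedy {β : Type*} [DecidableEq β] (dist : β → β → ℕ)
    (hsymm : ∀ u v, dist u v = dist v u) (hrefl : ∀ u, dist u u = 0)
    (d K : ℕ) (hd : 0 < d) :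
    ∀ S : Finset β, (∀ u ∈ S, (S.filter (fun v => dist u v < d)).card ≤ K) →
    ∃ T ⊆ S, (∀ u ∈ T, ∀ v ∈ T, u ≠ v → d ≤ dist u v) ∧ S.card ≤ K * T.card := by
  intro S
  induction S using Finset.strongInduction with
  | _ S ih =>
    intro hdeg
    rcases S.eq_empty_or_nonempty with rfl | ⟨u, hu⟩
    · exact ⟨∅, Finset.Subset.refl _, by simp, by simp⟩
    have hBuS : S.filter (fun v => dist u v < d) ⊆ S := Finset.filter_subset _ _
    have huBu : u ∈ S.filter (fun v => dist u v < d) := by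
      simp [hu, hrefl, hd]
    have hss : S \ S.filter (fun v => dist u v < d) ⊂ S :=
      Finset.sdiff_ssubset hBuS ⟨u, huBu⟩
    obtain ⟨T, hTsub, hTd, hTcard⟩ := ih _ hss (fun v hv => by
      refine le_trans (Finset.card_le_card ?_) (hdeg v (Finset.mem_sdiff.mp hv).1)
      exact Finset.filter_subset_filter _ Finset.sdiff_subset)
    have huT : u ∉ T := fun h => (Finset.mem_sdiff.mp (hTsub h)).2 huBu
    have key : ∀ b ∈ T, d ≤ dist u b := by
      intro b hb
      have h2 := (Finset.mem_sdiff.mp (hTsub hb)).2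
      have h1 := (Finset.mem_sdiff.mp (hTsub hb)).1
      simp only [Finset.mem_filter, not_and, not_lt] at h2
      exact h2 h1
    refine ⟨insert u T, Finset.insert_subset hu (hTsub.trans Finset.sdiff_subset), ?_, ?_⟩
    · intro a ha b hb hab
      rcases Finset.mem_insert.mp ha with ha' | ha' <;>
        rcases Finset.mem_insert.mp hb with hb' | hb'
      · exact absurd (ha'.trans hb'.symm) hab
      · rw [ha']; exact key b hb'
      · rw [hb', hsymm]; exact key a ha'
      · exact hTd a ha' b hb' hab
    · rw [Finset.card_insert_of_notMem huT, Nat.mul_succ]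
      have h1 : (S \ S.filter (fun v => dist u v < d)).card
          = S.card - (S.filter (fun v => dist u v < d)).card := Finset.card_sdiff_of_subset hBuS
      have h2 : (S.filter (fun v => dist u v < d)).card ≤ K := hdeg u hu
      have h3 : (S.filter (fun v => dist u v < d)).card ≤ S.card := Finset.card_le_card hBuS
      omega

end pieces

set_option maxHeartbeats 1000000 in
set_option maxHeartbeats 1000000 in
lemma main_finite (q m N : ℕ) (hN : 1 ≤ N)
    (C : Finset (Fin m → Fin q)) (hC : C.Nonempty)
    (x : ℝ) (hx0 : 0 < x) (hx1 : x ≤ 1) (dd : ℕ) :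
    ∃ T : Finset (Fin (m * N) → Fin q), minDistGE q (m * N) dd T ∧
      x ^ dd * (C.card : ℝ) ^ (2 * N) /
        (6 * (∑ p ∈ C ×ˢ C, x ^ hammingDist p.1 p.2) ^ N) ≤ T.card := by
  classical
  set S : ℝ := ∑ p ∈ C ×ˢ C, x ^ hammingDist p.1 p.2 with hS
  have hSpos : 0 < S := by
    apply Finset.sum_pos
    · intro p hp; positivity
    · exact hC.product hC
  have hSC : (C.card : ℝ) ≤ S := by
    have h1 : ∑ p ∈ C ×ˢ C, (if p.1 = p.2 then (1:ℝ) else 0) ≤ S := by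
      apply Finset.sum_le_sum
      intro p hp
      split
      · next h => rw [h, hammingDist_self]; simp
      · positivity
    refine le_trans (le_of_eq ?_) h1
    rw [Finset.sum_product]
    rw [show (C.card : ℝ) = ∑ u ∈ C, (1:ℝ) by simp]
    exact Finset.sum_congr rfl fun u hu => by rw [Finset.sum_ite_eq C u fun _ => (1:ℝ)]; simp [hu]
  have hCpos : (0:ℝ) < C.card := by exact_mod_cast hC.card_pos
  -- big code
  set D : Finset (Fin N → Fin m → Fin q) := Fintype.piFinset fun _ : Fin N => C with hD
  have hDcard : D.card = C.card ^ N := by simp [hD, Fintype.card_piFinset]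
  have hDpos : 0 < D.card := by
    rw [hDcard]; exact pow_pos hC.card_pos N
  set dist : (Fin N → Fin m → Fin q) → (Fin N → Fin m → Fin q) → ℕ :=
    fun u v => ∑ j, hammingDist (u j) (v j) with hdist
  have hsymm : ∀ u v, dist u v = dist v u := fun u v =>
    Finset.sum_congr rfl fun j _ => hammingDist_comm _ _
  have hrefl : ∀ u, dist u u = 0 := fun u => by simp [hdist]
  set deg : (Fin N → Fin m → Fin q) → ℕ :=
    fun u => (D.filter fun v => dist u v < dd).card with hdeg
  set P : ℕ := ∑ u ∈ D, deg u with hP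
  -- counting bound
  have hPx : (P : ℝ) * x ^ dd ≤ S ^ N := by
    have e1 : (P : ℝ) = ∑ u ∈ D, ∑ v ∈ D, (if dist u v < dd then (1:ℝ) else 0) := by
      rw [hP]
      push_cast [hdeg, Finset.card_filter]
      rfl
    have e2 : ∑ u ∈ D, ∑ v ∈ D, x ^ dist u v = S ^ N := by
      rw [← Finset.sum_product']
      exact enum_pow q m N x C
    rw [e1, ← e2, Finset.sum_mul]
    apply Finset.sum_le_sum
    intro u hu
    rw [Finset.sum_mul]
    apply Finset.sum_le_sum
    intro v hv
    split
    · next h =>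
      rw [one_mul]
      exact pow_le_pow_of_le_one hx0.le hx1 h.le
    · next h =>
      rw [zero_mul]
      positivity
  rcases Nat.eq_zero_or_pos dd with rfl | hdd
  · -- trivial case dd = 0
    refine ⟨D.image (flat q m N), fun u _ v _ _ => Nat.zero_le _, ?_⟩
    rw [Finset.card_image_of_injective _ (flat_inj q m N), hDcard]
    rw [pow_zero, one_mul, div_le_iff₀ (by positivity)]
    push_cast
    calc ((C.card:ℝ)) ^ (2 * N) = (C.card:ℝ)^N * (C.card:ℝ)^N := by
          rw [two_mul, pow_add]
      _ ≤ (C.card:ℝ)^N * S^N := by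
          apply mul_le_mul_of_nonneg_left _ (by positivity)
          exact pow_le_pow_left₀ (by positivity) hSC N
      _ ≤ (C.card:ℝ)^N * (6 * S^N) := by
          apply mul_le_mul_of_nonneg_left _ (by positivity)
          nlinarith [pow_pos hSpos N, pow_nonneg hSpos.le N]
  -- main case dd ≥ 1
  have hdiag : ∀ u ∈ D, 1 ≤ deg u := by
    intro u hu
    refine Finset.card_pos.mpr ⟨u, ?_⟩
    simp [hdeg, hu, hrefl u, hdd]
  have hDP : D.card ≤ P := by
    calc D.card = ∑ _u ∈ D, 1 := by simp
      _ ≤ ∑ u ∈ D, deg u := Finset.sum_le_sum hdiag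
  have hPpos : 0 < P := lt_of_lt_of_le hDpos hDP
  set K : ℕ := 2 * P / D.card + 1 with hK
  -- nat division facts
  have hKlb : 2 * P < D.card * K := by
    calc 2 * P = D.card * (2 * P / D.card) + 2 * P % D.card := (Nat.div_add_mod _ _).symm
      _ < D.card * (2 * P / D.card) + D.card :=
          Nat.add_lt_add_left (Nat.mod_lt _ hDpos) _
      _ = D.card * K := by rw [hK]; ring
  have hKub : K * D.card ≤ 2 * P + D.card := by
    rw [hK, add_mul, one_mul]
    exact Nat.add_le_add_right (Nat.div_mul_le_self _ _) _
  set bad : Finset (Fin N → Fin m → Fin q) := D.filter fun u => K < deg u with hbad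
  have hbadP : bad.card * (K + 1) ≤ P := by
    calc bad.card * (K + 1) = ∑ _u ∈ bad, (K + 1) := by rw [Finset.sum_const, smul_eq_mul]
      _ ≤ ∑ u ∈ bad, deg u := Finset.sum_le_sum fun u hu => (Finset.mem_filter.mp hu).2
      _ ≤ ∑ u ∈ D, deg u := Finset.sum_le_sum_of_subset (Finset.filter_subset _ _)
  set S0 : Finset (Fin N → Fin m → Fin q) := D \ bad with hS0
  have hS0card : S0.card + bad.card = D.card := by
    rw [hS0]
    exact Finset.card_sdiff_add_card_eq_card (Finset.filter_subset _ _)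
  obtain ⟨T0, hT0sub, hT0dist, hT0card⟩ := greedy dist hsymm hrefl dd K hdd S0 (by
    intro u hu
    have hunb : u ∉ bad := (Finset.mem_sdiff.mp hu).2
    have hud : u ∈ D := (Finset.mem_sdiff.mp hu).1
    have : deg u ≤ K := by
      by_contra h
      exact hunb (Finset.mem_filter.mpr ⟨hud, by omega⟩)
    refine le_trans (Finset.card_le_card ?_) this
    exact Finset.filter_subset_filter _ Finset.sdiff_subset)
  clear_value S D dist deg P K bad S0
  -- real arithmetic
  have hDc : ((D.card : ℝ)) = (C.card : ℝ) ^ N := by exact_mod_cast hDcard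
  have hDcpos : (0:ℝ) < D.card := by exact_mod_cast hDpos
  have hPr : (0:ℝ) < P := by exact_mod_cast hPpos
  have hKr : (1:ℝ) ≤ K := by rw [hK]; push_cast; linarith [Nat.cast_nonneg (α := ℝ) (2 * P / D.card)]
  have hKlbR : 2 * (P:ℝ) < D.card * K := by exact_mod_cast hKlb
  have hKubR : (K:ℝ) * D.card ≤ 2 * P + D.card := by exact_mod_cast hKub
  have hbadPR : (bad.card:ℝ) * (K + 1) ≤ P := by exact_mod_cast hbadP
  have hS0cardR : (S0.card:ℝ) + bad.card = D.card := by exact_mod_cast hS0card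
  have hT0cardR : (S0.card:ℝ) ≤ K * T0.card := by exact_mod_cast hT0card
  have hDPR : (D.card:ℝ) ≤ P := by exact_mod_cast hDP
  -- 2 * bad.card < D.card
  have hb2 : 2 * (bad.card:ℝ) < D.card := by
    have h1 : 2 * (bad.card:ℝ) * (K + 1) ≤ 2 * P := by nlinarith
    have h2 : 2 * (P:ℝ) < D.card * (K + 1) := by nlinarith
    have := lt_of_le_of_lt h1 h2
    exact lt_of_mul_lt_mul_right this (by positivity)
  have hs0 : (D.card:ℝ) < 2 * ((K:ℝ) * T0.card) := by linarith
  have hKDP : (K:ℝ) * D.card ≤ 3 * P := by linarith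
  have hDc2 : (D.card:ℝ) * D.card ≤ 6 * T0.card * P := by
    have ht0 : (0:ℝ) ≤ T0.card := Nat.cast_nonneg _
    calc (D.card:ℝ) * D.card ≤ 2 * ((K:ℝ) * T0.card) * D.card :=
          mul_le_mul_of_nonneg_right hs0.le hDcpos.le
      _ = 2 * (T0.card:ℝ) * ((K:ℝ) * D.card) := by ring
      _ ≤ 2 * (T0.card:ℝ) * (3 * P) := mul_le_mul_of_nonneg_left hKDP (by linarith)
      _ = 6 * T0.card * P := by ring
  -- final code
  refine ⟨T0.image (flat q m N), ?_, ?_⟩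
  · intro fu hfu fv hfv hne
    obtain ⟨u, hu, rfl⟩ := Finset.mem_image.mp hfu
    obtain ⟨v, hv, rfl⟩ := Finset.mem_image.mp hfv
    have huv : u ≠ v := fun h => hne (by rw [h])
    rw [hammingDist_flat, ← show ∀ a b, dist a b = ∑ j, hammingDist (a j) (b j) from fun a b => by rw [hdist]]
    exact hT0dist u hu v hv huv
  · rw [Finset.card_image_of_injective _ (flat_inj q m N)]
    rw [div_le_iff₀ (by positivity)]
    have hxd : (0:ℝ) < x ^ dd := by positivity
    have hSN : (0:ℝ) < S ^ N := by positivity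
    have hc2N : ((C.card:ℝ)) ^ (2 * N) = (D.card:ℝ) * D.card := by
      rw [hDc, two_mul, pow_add]
    rw [hc2N]
    calc x ^ dd * ((D.card:ℝ) * D.card) ≤ x ^ dd * (6 * T0.card * P) :=
          mul_le_mul_of_nonneg_left hDc2 hxd.le
      _ = 6 * (T0.card:ℝ) * ((P:ℝ) * x ^ dd) := by ring
      _ ≤ 6 * (T0.card:ℝ) * S ^ N :=
          mul_le_mul_of_nonneg_left hPx (by positivity)
      _ = (T0.card:ℝ) * (6 * S ^ N) := by ring


lemma Aq_bddAbove (q n d : ℕ) :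
    BddAbove {k : ℕ | ∃ C : Finset (Fin n → Fin q), minDistGE q n d C ∧ C.card = k} := by
  refine ⟨q ^ n, fun k hk => ?_⟩
  obtain ⟨T, _, rfl⟩ := hk
  calc T.card ≤ Fintype.card (Fin n → Fin q) := Finset.card_le_univ T
    _ = q ^ n := by simp

lemma le_Aq (q n d : ℕ) (T : Finset (Fin n → Fin q)) (hT : minDistGE q n d T) :
    T.card ≤ Aq q n d :=
  le_csSup (Aq_bddAbove q n d) ⟨T, hT, rfl⟩

lemma Aq_le (q n d : ℕ) : Aq q n d ≤ q ^ n := by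
  have hne : {k : ℕ | ∃ C : Finset (Fin n → Fin q), minDistGE q n d C ∧ C.card = k}.Nonempty :=
    ⟨0, ∅, fun u hu => absurd hu (Finset.notMem_empty u), Finset.card_empty⟩
  apply csSup_le hne
  rintro k ⟨T, _, rfl⟩
  calc T.card ≤ Fintype.card (Fin n → Fin q) := Finset.card_le_univ T
    _ = q ^ n := by simp

lemma F_le_one (q : ℕ) (hq : 2 ≤ q) (δ : ℝ) (n : ℕ) :
    Real.logb q (Aq q n ⌈δ * (n : ℝ)⌉₊) / n ≤ 1 := by
  rcases Nat.eq_zero_or_pos n with rfl | hn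
  · simp
  have hq1 : (1:ℝ) < q := by exact_mod_cast hq
  have h1 : Real.logb q (Aq q n ⌈δ * (n : ℝ)⌉₊) ≤ Real.logb q ((q:ℝ) ^ n) := by
    rcases Nat.eq_zero_or_pos (Aq q n ⌈δ * (n : ℝ)⌉₊) with h0 | hA
    · rw [h0]
      simp only [Nat.cast_zero, Real.logb_zero]
      refine Real.logb_nonneg hq1 ?_
      exact_mod_cast Nat.one_le_pow n q (by omega)
    · apply Real.logb_le_logb_of_le hq1 (by exact_mod_cast hA)
      exact_mod_cast Aq_le q n _
  rw [Real.logb_pow, Real.logb_self_eq_one hq1, mul_one] at h1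
  rw [div_le_one (by exact_mod_cast hn)]
  exact h1

set_option maxHeartbeats 1000000 in
theorem generalized_GV_asymptotic (q m : ℕ) (hq : 2 ≤ q) (hm : 1 ≤ m)
    (C : Finset (Fin m → Fin q)) (hC : C.Nonempty)
    (x : ℝ) (hx0 : 0 < x) (hx1 : x ≤ 1) (δ : ℝ) (hδ0 : 0 ≤ δ) (hδ1 : δ ≤ 1) :
    (1 / (m : ℝ)) * Real.logb q ((C.card : ℝ) / distEnum q m C x) + δ * Real.logb q x
      ≤ alphaQ q δ := by
  have hq1 : (1:ℝ) < q := by exact_mod_cast hq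
  have hcpos : (0:ℝ) < C.card := by exact_mod_cast hC.card_pos
  have hSpos : (0:ℝ) < ∑ p ∈ C ×ˢ C, x ^ hammingDist p.1 p.2 :=
    Finset.sum_pos (fun p _ => by positivity) (hC.product hC)
  set S : ℝ := ∑ p ∈ C ×ˢ C, x ^ hammingDist p.1 p.2 with hSdef
  have hmR : (0:ℝ) < m := by exact_mod_cast hm
  set lC : ℝ := Real.logb q C.card with hlC
  set lS : ℝ := Real.logb q S with hlS
  set lX : ℝ := Real.logb q x with hlX
  set l6 : ℝ := Real.logb q 6 with hl6
  have hlXn : lX ≤ 0 := Real.logb_nonpos hq1 hx0.le hx1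
  have hL : (1 / (m : ℝ)) * Real.logb q ((C.card : ℝ) / distEnum q m C x) + δ * Real.logb q x
      = (1/(m:ℝ)) * (2 * lC - lS) + δ * lX := by
    have h1 : (C.card : ℝ) / distEnum q m C x = (C.card:ℝ)^2 / S := by
      rw [distEnum, ← hSdef]
      field_simp
    rw [h1, Real.logb_div (by positivity) (by positivity), Real.logb_pow]
    norm_num
    rfl
  rw [hL]
  apply le_of_forall_sub_le
  intro ε hε
  set cst : ℝ := lX - l6 with hcst
  -- key estimate along n = m * N
  have key : ∀ N : ℕ, 1 ≤ N →
      (1/(m:ℝ)) * (2 * lC - lS) + δ * lX + cst / ((m:ℝ) * N) ≤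
        Real.logb q (Aq q (m*N) ⌈δ * (((m*N : ℕ)) : ℝ)⌉₊) / ((m*N : ℕ) : ℝ) := by
    intro N hN
    have hNR : (0:ℝ) < N := by exact_mod_cast hN
    have hnR : ((m*N : ℕ) : ℝ) = (m:ℝ) * N := by push_cast; ring
    have hnpos : (0:ℝ) < ((m*N : ℕ) : ℝ) := by rw [hnR]; positivity
    set dd : ℕ := ⌈δ * (((m*N : ℕ)) : ℝ)⌉₊ with hdd
    obtain ⟨T, hT, hTcard⟩ := main_finite q m N hN C hC x hx0 hx1 dd
    have hbpos : (0:ℝ) < x ^ dd * (C.card : ℝ) ^ (2*N) / (6 * S ^ N) := by positivity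
    have hAq : x ^ dd * (C.card : ℝ) ^ (2*N) / (6 * S ^ N) ≤ (Aq q (m*N) dd : ℝ) := by
      refine hTcard.trans ?_
      exact_mod_cast le_Aq q (m*N) dd T hT
    have hlog : Real.logb q (x ^ dd * (C.card : ℝ) ^ (2*N) / (6 * S ^ N))
        ≤ Real.logb q (Aq q (m*N) dd) := Real.logb_le_logb_of_le hq1 hbpos hAq
    have e1 : Real.logb q (x ^ dd * (C.card : ℝ) ^ (2*N) / (6 * S ^ N))
        = dd * lX + 2*N*lC - N*lS - l6 := by
      rw [Real.logb_div (by positivity) (by positivity),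
        Real.logb_mul (by positivity) (by positivity),
        Real.logb_mul (by positivity) (by positivity),
        Real.logb_pow, Real.logb_pow, Real.logb_pow]
      push_cast
      ring
    have hddle : (dd : ℝ) ≤ δ * ((m:ℝ)*N) + 1 := by
      rw [hdd, ← hnR]
      exact (Nat.ceil_lt_add_one (by positivity)).le
    have hddmul : (δ * ((m:ℝ)*N) + 1) * lX ≤ (dd:ℝ) * lX :=
      mul_le_mul_of_nonpos_right hddle hlXn
    rw [le_div_iff₀ hnpos, hnR]
    have hexp : ((1/(m:ℝ)) * (2 * lC - lS) + δ * lX + cst / ((m:ℝ) * N)) * ((m:ℝ) * N)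
        = (N:ℝ)*(2*lC - lS) + δ * ((m:ℝ)*N) * lX + cst := by
      field_simp
    rw [hexp]
    have := hlog
    rw [e1] at this
    rw [hcst]
    linarith
  unfold alphaQ
  have hbdd : Filter.IsBoundedUnder (· ≤ ·) Filter.atTop
      (fun n : ℕ => Real.logb q (Aq q n ⌈δ * (n : ℝ)⌉₊) / n) :=
    Filter.isBoundedUnder_of ⟨1, F_le_one q hq δ⟩
  refine le_trans (le_refl _) (Filter.le_limsup_of_frequently_le ?_ hbdd)
  rw [Filter.frequently_atTop]
  intro n₀
  set N : ℕ := max 1 (max n₀ (⌈(-cst)/ε⌉₊ + 1)) with hN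
  have hN1 : 1 ≤ N := le_max_left _ _
  have hNn₀ : n₀ ≤ N := le_trans (le_max_left _ _) (le_max_right _ _)
  have hNε : (-cst) ≤ ε * ((m:ℝ) * N) := by
    have hN2 : (⌈(-cst)/ε⌉₊ : ℝ) ≤ N := by
      have : ⌈(-cst)/ε⌉₊ ≤ N := le_trans (Nat.le_succ _) (le_trans (le_max_right _ _) (le_max_right _ _))
      exact_mod_cast this
    have h3 : (-cst)/ε ≤ (N:ℝ) := le_trans (Nat.le_ceil _) hN2
    have h4 : (-cst) ≤ ε * N := by
      rw [div_le_iff₀ hε] at h3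
      linarith
    have h5 : ε * (N:ℝ) ≤ ε * ((m:ℝ)*N) := by
      apply mul_le_mul_of_nonneg_left _ hε.le
      have hNpos : (0:ℝ) < (N:ℝ) := by exact_mod_cast lt_of_lt_of_le Nat.one_pos hN1
      have hm1 : (1:ℝ) ≤ (m:ℝ) := by exact_mod_cast hm
      nlinarith
    linarith
  refine ⟨m * N, le_trans hNn₀ (Nat.le_mul_of_pos_left N (by omega)), ?_⟩
  have hkey := key N hN1
  have hmN : (0:ℝ) < (m:ℝ) * N := by
    have : (0:ℝ) < (N:ℝ) := by exact_mod_cast lt_of_lt_of_le Nat.one_pos hN1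
    positivity
  have hcstε : -ε ≤ cst / ((m:ℝ) * N) := by
    rw [neg_le, ← neg_div]
    rw [div_le_iff₀ hmN]
    linarith
  exact le_trans (by linarith) hkey
end

section
/- Let q ≥ 2, m ≥ 1, n ≥ 1 be integers, let C ⊆ Q^m be a nonempty code with distance enumerator polynomial B(x), let 0 < δ ≤ 1 and set d = ⌈δmn⌉. Then for every real x with 0 < x ≤ 1 there exists a subcode D ⊆ C^n ⊆ Q^{mn} whose distinct codewords have pairwise Hamming distance at least d and whose cardinality satisfies |D| ≥ |C|^n · x^{d−1} / B(x)^n. -/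
open Finset

/-- `codePow q m n C = C^n` : words of length `mn` over `Q` (indexed by `Fin n × Fin m`)
that are concatenations of `n` codewords of `C`. -/
def codePow (q m n : ℕ) (C : Finset (Fin m → Fin q)) : Finset (Fin n × Fin m → Fin q) :=
  Finset.univ.filter fun w => ∀ i : Fin n, (fun j => w (i, j)) ∈ C

private lemma caro_wei {α : Type*} [DecidableEq α] (r : α → α → Prop) [DecidableRel r]
    (hrefl : ∀ a, r a a) (hsymm : ∀ a b, r a b → r b a) (S : Finset α) :
    ∃ D : Finset α, D ⊆ S ∧ (∀ u ∈ D, ∀ v ∈ D, u ≠ v → ¬ r u v) ∧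
      ∑ v ∈ S, ((S.filter (fun w => r v w)).card : ℝ)⁻¹ ≤ D.card := by
  induction S using Finset.strongInduction with
  | _ S ih =>
  rcases S.eq_empty_or_nonempty with rfl | hS
  · exact ⟨∅, by simp, by simp, by simp⟩
  obtain ⟨u, hu, hmin⟩ := S.exists_min_image (fun v => (S.filter (fun w => r v w)).card) hS
  set B := S.filter (fun w => r u w) with hBdef
  have huB : u ∈ B := mem_filter.mpr ⟨hu, hrefl u⟩
  have hBpos : 0 < B.card := card_pos.mpr ⟨u, huB⟩
  have hS'ss : S \ B ⊂ S := ⟨sdiff_subset, fun h => (mem_sdiff.mp (h hu)).2 huB⟩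
  obtain ⟨D', hD'sub, hD'ind, hD'card⟩ := ih (S \ B) hS'ss
  have hsub' : D' ⊆ S := hD'sub.trans sdiff_subset
  have huD' : u ∉ D' := fun h => (mem_sdiff.mp (hD'sub h)).2 huB
  refine ⟨insert u D', insert_subset hu hsub', ?_, ?_⟩
  · intro a ha b hb hab hr
    have key : ∀ c ∈ D', ¬ r u c :=
      fun c hc h => (mem_sdiff.mp (hD'sub hc)).2 (mem_filter.mpr ⟨hsub' hc, h⟩)
    rcases mem_insert.mp ha with ha' | ha' <;> rcases mem_insert.mp hb with hb' | hb'
    · exact hab (ha'.trans hb'.symm)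
    · exact key b hb' (by rwa [ha'] at hr)
    · exact key a ha' (by rw [hb'] at hr; exact hsymm _ _ hr)
    · exact hD'ind a ha' b hb' hab hr
  · rw [card_insert_of_notMem huD']
    push_cast
    rw [← Finset.sum_sdiff (filter_subset (fun w => r u w) S)]
    have h1 : ∑ v ∈ B, ((S.filter (fun w => r v w)).card : ℝ)⁻¹ ≤ 1 := by
      calc ∑ v ∈ B, ((S.filter (fun w => r v w)).card : ℝ)⁻¹
          ≤ ∑ v ∈ B, ((B.card : ℝ))⁻¹ := by
            refine Finset.sum_le_sum fun v hv => ?_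
            have hv' : v ∈ S := (filter_subset _ _) hv
            have := hmin v hv'
            exact inv_anti₀ (by exact_mod_cast hBpos) (by exact_mod_cast this)
        _ = 1 := by
            rw [Finset.sum_const, nsmul_eq_mul]
            field_simp
    have h2 : ∑ v ∈ S \ B, ((S.filter (fun w => r v w)).card : ℝ)⁻¹ ≤ (D'.card : ℝ) := by
      refine le_trans (Finset.sum_le_sum fun v hv => ?_) hD'card
      have hvpos : 0 < ((S \ B).filter (fun w => r v w)).card :=
        card_pos.mpr ⟨v, mem_filter.mpr ⟨hv, hrefl v⟩⟩
      have hle : ((S \ B).filter (fun w => r v w)).card ≤ (S.filter (fun w => r v w)).card :=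
        card_le_card (filter_subset_filter _ sdiff_subset)
      exact inv_anti₀ (by exact_mod_cast hvpos) (by exact_mod_cast hle)
    linarith

private lemma cs_step {α : Type*} (S : Finset α) (b : α → ℕ) (hb : ∀ v ∈ S, 0 < b v) :
    (S.card : ℝ) ^ 2 ≤ (∑ v ∈ S, ((b v : ℝ))⁻¹) * ∑ v ∈ S, (b v : ℝ) := by
  have h := Finset.sum_mul_sq_le_sq_mul_sq S (fun v => Real.sqrt (b v)⁻¹)
    (fun v => Real.sqrt (b v))
  have h1 : ∑ v ∈ S, Real.sqrt (b v)⁻¹ * Real.sqrt (b v) = (S.card : ℝ) := by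
    rw [Finset.card_eq_sum_ones S]
    push_cast
    refine Finset.sum_congr rfl fun v hv => ?_
    rw [← Real.sqrt_mul (by positivity), inv_mul_cancel₀ (by exact_mod_cast (hb v hv).ne'),
      Real.sqrt_one]
  have h2 : ∀ v ∈ S, Real.sqrt (b v)⁻¹ ^ 2 = ((b v : ℝ))⁻¹ := fun v hv =>
    Real.sq_sqrt (by positivity)
  have h3 : ∀ v ∈ S, Real.sqrt (b v) ^ 2 = (b v : ℝ) := fun v hv =>
    Real.sq_sqrt (by positivity)
  rw [h1, Finset.sum_congr rfl h2, Finset.sum_congr rfl h3] at h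
  exact h

private lemma ham_sum {q m n : ℕ} (u v : Fin n × Fin m → Fin q) :
    hammingDist u v = ∑ i : Fin n, hammingDist (fun j => u (i, j)) (fun j => v (i, j)) := by
  simp only [hammingDist, card_filter]
  rw [Fintype.sum_prod_type]

private lemma sum_codePow_eq {q m n : ℕ} (C : Finset (Fin m → Fin q)) (x : ℝ) :
    ∑ p ∈ (codePow q m n C) ×ˢ (codePow q m n C), x ^ hammingDist p.1 p.2
      = (∑ p ∈ C ×ˢ C, x ^ hammingDist p.1 p.2) ^ n := by
  have hrw : ((∑ p ∈ C ×ˢ C, x ^ hammingDist p.1 p.2) ^ n)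
      = ∑ g ∈ Fintype.piFinset (fun _ : Fin n => C ×ˢ C),
          ∏ i, x ^ hammingDist (g i).1 (g i).2 := by
    rw [← Fin.prod_const n (∑ p ∈ C ×ˢ C, x ^ hammingDist p.1 p.2), Finset.prod_univ_sum]
  rw [hrw]
  refine Finset.sum_nbij' (i := fun p i => ((fun j => p.1 (i, j)), (fun j => p.2 (i, j))))
    (j := fun g => ((fun p => (g p.1).1 p.2), (fun p => (g p.1).2 p.2))) ?_ ?_ ?_ ?_ ?_
  · rintro ⟨a, b⟩ hp
    simp only [mem_product, codePow, mem_filter, mem_univ, true_and] at hp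
    exact Fintype.mem_piFinset.mpr fun i => mem_product.mpr ⟨hp.1 i, hp.2 i⟩
  · intro g hg
    simp only [Fintype.mem_piFinset] at hg
    simp only [mem_product, codePow, mem_filter, mem_univ, true_and]
    exact ⟨fun i => (mem_product.mp (hg i)).1, fun i => (mem_product.mp (hg i)).2⟩
  · rintro ⟨a, b⟩ hp
    simp
  · intro g hg
    funext i
    simp
  · rintro ⟨a, b⟩ hp
    simp only
    rw [ham_sum, ← Finset.prod_pow_eq_pow_sum]

private lemma card_codePow {q m n : ℕ} (C : Finset (Fin m → Fin q)) :
    (codePow q m n C).card = C.card ^ n := by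
  have h : (codePow q m n C).card = (Fintype.piFinset (fun _ : Fin n => C)).card := by
    refine Finset.card_nbij' (i := fun w i j => w (i, j))
      (j := fun g p => g p.1 p.2) ?_ ?_ ?_ ?_
    · intro w hw
      simp only [codePow, mem_coe, mem_filter, mem_univ, true_and] at hw
      exact Fintype.mem_piFinset.mpr hw
    · intro g hg
      simp only [codePow, mem_coe, mem_filter, mem_univ, true_and]
      exact fun i => Fintype.mem_piFinset.mp hg i
    · intro w hw; rfl
    · intro g hg; rfl
  rw [h, Fintype.card_piFinset]
  simp

theorem exists_subcode_of_codePow (q m n : ℕ) (hq : 2 ≤ q) (hm : 1 ≤ m) (hn : 1 ≤ n)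
    (C : Finset (Fin m → Fin q)) (hC : C.Nonempty)
    (δ : ℝ) (hδ0 : 0 < δ) (hδ1 : δ ≤ 1)
    (x : ℝ) (hx0 : 0 < x) (hx1 : x ≤ 1) :
    ∃ D : Finset (Fin n × Fin m → Fin q), D ⊆ codePow q m n C ∧
      (∀ u ∈ D, ∀ v ∈ D, u ≠ v → ⌈δ * ((m * n : ℕ) : ℝ)⌉₊ ≤ hammingDist u v) ∧
      (C.card : ℝ) ^ n * x ^ (⌈δ * ((m * n : ℕ) : ℝ)⌉₊ - 1) / (distEnum q m C x) ^ n
        ≤ (D.card : ℝ) := by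
  set d := ⌈δ * ((m * n : ℕ) : ℝ)⌉₊ with hd
  have hmn : (0 : ℝ) < ((m * n : ℕ) : ℝ) := by
    have : 0 < m * n := Nat.mul_pos hm hn
    exact_mod_cast this
  have hd1 : 1 ≤ d := by
    rw [hd]
    exact Nat.ceil_pos.mpr (by positivity)
  set S := codePow q m n C with hSdef
  have hCcard : (0 : ℝ) < (C.card : ℝ) := by exact_mod_cast card_pos.mpr hC
  obtain ⟨c, hc⟩ := hC
  obtain ⟨D, hDsub, hDind, hDcard⟩ := caro_wei (fun u v => hammingDist u v ≤ d - 1)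
    (fun a => by simp) (fun a b h => by show hammingDist b a ≤ d - 1; rw [hammingDist_comm]; exact h) S
  refine ⟨D, hDsub, fun u hu v hv huv => ?_, ?_⟩
  · have := hDind u hu v hv huv
    omega
  set b : (Fin n × Fin m → Fin q) → ℕ :=
    fun v => (S.filter (fun w => hammingDist v w ≤ d - 1)).card with hbdef
  have hbpos : ∀ v ∈ S, 0 < b v := fun v hv => card_pos.mpr ⟨v, mem_filter.mpr ⟨hv, by simp⟩⟩
  have hCS := cs_step S b hbpos
  set T := ∑ v ∈ S, (b v : ℝ) with hTdef
  have hTnn : 0 ≤ T := Finset.sum_nonneg fun v _ => by positivity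
  have hTD : (S.card : ℝ) ^ 2 ≤ (D.card : ℝ) * T :=
    le_trans hCS (mul_le_mul_of_nonneg_right hDcard hTnn)
  have hxk : (0 : ℝ) < x ^ (d - 1) := pow_pos hx0 _
  have hE : 0 < distEnum q m C x := by
    rw [distEnum]
    exact mul_pos (by positivity)
      (Finset.sum_pos (fun p _ => pow_pos hx0 _) ⟨(c, c), mem_product.mpr ⟨hc, hc⟩⟩)
  have hTx : T * x ^ (d - 1) ≤ ((C.card : ℝ) * distEnum q m C x) ^ n := by
    have key : ∀ v ∈ S, (b v : ℝ) * x ^ (d - 1) ≤ ∑ w ∈ S, x ^ hammingDist v w := by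
      intro v hv
      calc (b v : ℝ) * x ^ (d - 1)
          = ∑ _w ∈ S.filter (fun w => hammingDist v w ≤ d - 1), x ^ (d - 1) := by
            rw [Finset.sum_const, nsmul_eq_mul]
        _ ≤ ∑ w ∈ S.filter (fun w => hammingDist v w ≤ d - 1), x ^ hammingDist v w :=
            Finset.sum_le_sum fun w hw =>
              pow_le_pow_of_le_one hx0.le hx1 (mem_filter.mp hw).2
        _ ≤ ∑ w ∈ S, x ^ hammingDist v w :=
            Finset.sum_le_sum_of_subset_of_nonneg (filter_subset _ _)
              (fun w _ _ => by positivity)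
    calc T * x ^ (d - 1) = ∑ v ∈ S, (b v : ℝ) * x ^ (d - 1) := by rw [← Finset.sum_mul]
      _ ≤ ∑ v ∈ S, ∑ w ∈ S, x ^ hammingDist v w := Finset.sum_le_sum key
      _ = ∑ p ∈ S ×ˢ S, x ^ hammingDist p.1 p.2 := by rw [Finset.sum_product]
      _ = (∑ p ∈ C ×ˢ C, x ^ hammingDist p.1 p.2) ^ n := sum_codePow_eq C x
      _ = ((C.card : ℝ) * distEnum q m C x) ^ n := by
          rw [distEnum]
          field_simp
  have hScard : (S.card : ℝ) = (C.card : ℝ) ^ n := by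
    rw [hSdef, card_codePow]
    push_cast
    ring
  set N : ℝ := (C.card : ℝ) ^ n with hN
  have hNpos : 0 < N := pow_pos hCcard n
  set E : ℝ := distEnum q m C x with hEdef
  rw [div_le_iff₀ (pow_pos hE n)]
  rw [hScard] at hTD
  rw [mul_pow] at hTx
  have hDnn : (0 : ℝ) ≤ (D.card : ℝ) := Nat.cast_nonneg _
  have h1 : N ^ 2 * x ^ (d - 1) ≤ (D.card : ℝ) * (T * x ^ (d - 1)) := by
    rw [← mul_assoc]
    exact mul_le_mul_of_nonneg_right hTD hxk.le
  have h2 : (D.card : ℝ) * (T * x ^ (d - 1)) ≤ (D.card : ℝ) * (N * E ^ n) :=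
    mul_le_mul_of_nonneg_left hTx hDnn
  have e1 : N * (N * x ^ (d - 1)) = N ^ 2 * x ^ (d - 1) := by ring
  have e2 : (D.card : ℝ) * (N * E ^ n) = N * ((D.card : ℝ) * E ^ n) := by ring
  have h3 : N * (N * x ^ (d - 1)) ≤ N * ((D.card : ℝ) * E ^ n) := by
    rw [e1, ← e2]
    exact h1.trans h2
  exact le_of_mul_le_mul_left h3 hNpos
end

section
/- Every finite simple graph without loops with v vertices and e edges contains a clique of size at least v² / (v² − 2e). -/
open Finset

/-- Edge count bound for the Turán graph: `r * 2e + v² ≤ r * v²`. -/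
lemma turanGraph_double_edges_bound (v r : ℕ) (hr : 0 < r) :
    r * (2 * #(SimpleGraph.turanGraph v r).edgeFinset) + v ^ 2 ≤ r * v ^ 2 := by
  classical
  set G := SimpleGraph.turanGraph v r with hG
  let f : Fin v → ℕ := fun i => (i : ℕ) % r
  let m : ℕ → ℕ := fun c => #(univ.filter (fun j : Fin v => f j = c))
  have hdeg : ∀ i : Fin v, G.degree i + m (f i) = v := by
    intro i
    rw [SimpleGraph.degree, SimpleGraph.neighborFinset_eq_filter]
    have : (univ.filter (G.Adj i)) = univ.filter (fun j : Fin v => ¬ f j = f i) := by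
      apply Finset.filter_congr
      intro j _
      constructor
      · intro h h2; exact h (h2.symm)
      · intro h h2; exact h (h2.symm)
    rw [this]
    have := Finset.card_filter_add_card_filter_not
      (s := (univ : Finset (Fin v))) (p := fun j : Fin v => f j = f i)
    simp only [Finset.card_univ, Fintype.card_fin] at this
    have hm : m (f i) = #(univ.filter (fun j : Fin v => f j = f i)) := rfl
    omega
  have hsum : 2 * #G.edgeFinset + (∑ i : Fin v, m (f i)) = v ^ 2 := by
    have h1 : ∑ i : Fin v, (G.degree i + m (f i)) = v * v := by
      simp only [hdeg, Finset.sum_const, Finset.card_univ, Fintype.card_fin, smul_eq_mul]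
    rw [Finset.sum_add_distrib, G.sum_degrees_eq_twice_card_edges] at h1
    rw [sq]; omega
  have hS : (∑ i : Fin v, m (f i)) = ∑ c ∈ univ.image f, m c * m c := by
    rw [Finset.sum_comp m f]
    simp [m, smul_eq_mul]

  have hv : ∑ c ∈ univ.image f, m c = v := by
    have := Finset.card_eq_sum_card_image f (univ : Finset (Fin v))
    simpa [Finset.card_univ] using this.symm
  have himg : #(univ.image f) ≤ r := by
    have : univ.image f ⊆ Finset.range r := by
      intro c hc
      simp only [Finset.mem_image] at hc
      obtain ⟨i, _, rfl⟩ := hc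
      exact Finset.mem_range.2 (Nat.mod_lt _ hr)
    simpa using Finset.card_le_card this
  have hcs : v ^ 2 ≤ r * ∑ c ∈ univ.image f, m c * m c := by
    have := sq_sum_le_card_mul_sum_sq (s := univ.image f) (f := m)
    rw [hv] at this
    calc v ^ 2 ≤ #(univ.image f) * ∑ c ∈ univ.image f, m c ^ 2 := this
      _ ≤ r * ∑ c ∈ univ.image f, m c * m c := by
          apply Nat.mul_le_mul himg
          exact le_of_eq (Finset.sum_congr rfl fun c _ => sq (m c))
  have := hS ▸ hcs
  nlinarith [hsum, this]

/-- Turán's bound for `K_{r+1}`-free graphs: `r * 2e + v² ≤ r * v²`. -/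
lemma cliqueFree_double_edges_bound {V : Type*} [Fintype V]
    (G : SimpleGraph V) [DecidableRel G.Adj] {r : ℕ} (hr : 0 < r)
    (hfree : G.CliqueFree (r + 1)) :
    r * (2 * #G.edgeFinset) + Fintype.card V ^ 2 ≤ r * Fintype.card V ^ 2 := by
  classical
  obtain ⟨H, _, hH⟩ := SimpleGraph.exists_isTuranMaximal (V := V) (r := r) hr
  have h1 : #G.edgeFinset ≤ #H.edgeFinset := hH.2 hfree
  obtain ⟨g⟩ := hH.nonempty_iso_turanGraph
  have h2 : #H.edgeFinset = #(SimpleGraph.turanGraph (Fintype.card V) r).edgeFinset :=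
    g.card_edgeFinset_eq
  have h3 := turanGraph_double_edges_bound (Fintype.card V) r hr
  have h4 : r * (2 * #G.edgeFinset) ≤
      r * (2 * #(SimpleGraph.turanGraph (Fintype.card V) r).edgeFinset) :=
    Nat.mul_le_mul_left r (Nat.mul_le_mul_left 2 (h2 ▸ h1))
  omega

/-- Turán's theorem (clique form): a finite simple graph without loops with `v` vertices
and `e` edges contains a clique of size at least `v² / (v² − 2e)`. -/
theorem turan_clique_bound {V : Type*} [Fintype V] [DecidableEq V]
    (G : SimpleGraph V) [DecidableRel G.Adj] :
    ∃ t : Finset V, G.IsClique (t : Set V) ∧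
      (Fintype.card V : ℝ) ^ 2 / ((Fintype.card V : ℝ) ^ 2 - 2 * (G.edgeFinset.card : ℝ))
        ≤ (t.card : ℝ) := by
  classical
  rcases Nat.eq_zero_or_pos (Fintype.card V) with hv0 | hv
  · refine ⟨∅, by simp, ?_⟩
    rw [hv0]
    simp
  · obtain ⟨s, hs⟩ := SimpleGraph.exists_isNClique_cliqueNum (G := G)
    set n := G.cliqueNum with hn
    have hn1 : 1 ≤ n := by
      obtain ⟨x⟩ := Fintype.card_pos_iff.mp hv
      have hx : G.IsClique ({x} : Finset V) := by simp
      have := SimpleGraph.IsClique.card_le_cliqueNum (tc := hx)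
      simpa using this
    have hfree : G.CliqueFree (n + 1) := by
      intro t ht
      have h1 := SimpleGraph.IsClique.card_le_cliqueNum (tc := ht.1)
      have h2 := ht.2
      omega
    have key := cliqueFree_double_edges_bound G hn1 hfree
    refine ⟨s, hs.1, ?_⟩
    rw [hs.2]
    set v := Fintype.card V with hvdef
    set e := #G.edgeFinset with hedef
    have he : 2 * e < v ^ 2 := by
      have h1 : e ≤ v.choose 2 := SimpleGraph.card_edgeFinset_le_card_choose_two
      have h2 : v.choose 2 = v * (v - 1) / 2 := Nat.choose_two_right v
      have hvv : v * (v - 1) < v ^ 2 := by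
        rw [sq]
        exact Nat.mul_lt_mul_of_le_of_lt le_rfl (Nat.sub_lt hv one_pos) hv
      omega
    have hdenom : (0 : ℝ) < (v : ℝ) ^ 2 - 2 * (e : ℝ) := by
      have : ((2 * e : ℕ) : ℝ) < ((v ^ 2 : ℕ) : ℝ) := by exact_mod_cast he
      push_cast at this
      linarith
    rw [div_le_iff₀ hdenom]
    have keyr : (n : ℝ) * (2 * e) + (v : ℝ) ^ 2 ≤ (n : ℝ) * (v : ℝ) ^ 2 := by
      exact_mod_cast key
    nlinarith
end

section
/- Let G = (V,E) be a finite simple graph without loops and for each vertex v let d_v denote its degree. Then G contains a clique of size at least Σ_{v∈V} 1/(|V| − d_v). -/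
open Finset

private theorem caro_wei_aux : ∀ (n : ℕ) {V : Type*} [Fintype V] [DecidableEq V]
    (G : SimpleGraph V) [DecidableRel G.Adj], Fintype.card V = n →
    ∃ t : Finset V, G.IsClique (t : Set V) ∧
      ∑ v : V, (1 : ℝ) / ((Fintype.card V : ℝ) - (G.degree v : ℝ)) ≤ (t.card : ℝ) := by
  intro n
  induction n using Nat.strong_induction_on with
  | _ n ih =>
    intro V _ _ G _ hn
    rcases isEmpty_or_nonempty V with hV | hV
    · exact ⟨∅, by simp [SimpleGraph.IsClique], by simp⟩
    · obtain ⟨v, -, hv⟩ := Finset.exists_max_image univ (fun u => G.degree u)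
        ⟨Classical.arbitrary V, mem_univ _⟩
      set s := G.neighborFinset v with hs
      letI H : SimpleGraph {x // x ∈ s} := G.comap Subtype.val
      letI hdec : DecidableRel H.Adj := fun a b => ‹DecidableRel G.Adj› a.val b.val
      have hcard : Fintype.card {x // x ∈ s} = s.card := Fintype.card_coe s
      have hsd : s.card = G.degree v := rfl
      have hslt : s.card < n := by
        rw [hsd, ← hn]; exact G.degree_lt_card_verts v
      obtain ⟨t', ht'c, ht's⟩ := ih s.card hslt H hcard
      -- degree of H in terms of G
      have hdeg : ∀ x : {a // a ∈ s}, H.degree x = ((G.neighborFinset x.val) ∩ s).card := by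
        intro x
        rw [← SimpleGraph.card_neighborFinset_eq_degree]
        refine Finset.card_bij (fun y _ => (y : V)) ?_ ?_ ?_
        · intro y hy
          simp only [SimpleGraph.mem_neighborFinset] at hy
          simp only [mem_inter, SimpleGraph.mem_neighborFinset]
          exact ⟨hy, y.2⟩
        · intro a _ b _ h; exact Subtype.ext h
        · intro w hw
          simp only [mem_inter, SimpleGraph.mem_neighborFinset] at hw
          exact ⟨⟨w, hw.2⟩, (SimpleGraph.mem_neighborFinset _ _ _).mpr hw.1, rfl⟩
      -- key degree inequality for u ∈ s
      have hkey : ∀ x : {a // a ∈ s}, G.degree x.val + s.card ≤ H.degree x + n := by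
        intro x
        have h2 : ((G.neighborFinset x.val) \ s).card ≤ n - s.card := by
          have : (G.neighborFinset x.val) \ s ⊆ sᶜ := by
            intro w hw; rw [mem_compl]; exact (mem_sdiff.mp hw).2
          calc ((G.neighborFinset x.val) \ s).card ≤ sᶜ.card := card_le_card this
            _ = n - s.card := by rw [card_compl, hn]
        have h3 : G.degree x.val ≤ H.degree x + (n - s.card) := by
          rw [← SimpleGraph.card_neighborFinset_eq_degree, hdeg]
          have := Finset.card_inter_add_card_sdiff (G.neighborFinset x.val) s
          omega
        have h4 : s.card ≤ n := hslt.le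
        omega
      have hHlt : ∀ x : {a // a ∈ s}, H.degree x < s.card := by
        intro x
        rw [← hcard]
        haveI : Nonempty {a // a ∈ s} := ⟨x⟩
        exact H.degree_lt_card_verts x
      have hdlt : ∀ u : V, G.degree u < n := by
        intro u; rw [← hn]; exact G.degree_lt_card_verts u
      -- define the clique
      set t : Finset V := insert v (t'.image Subtype.val) with ht
      have hvnot : v ∉ t'.image Subtype.val := by
        intro hmem
        obtain ⟨x, -, hxv⟩ := mem_image.mp hmem
        have hvs : v ∈ s := by rw [← hxv]; exact x.2
        exact G.notMem_neighborFinset_self v hvs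
      have htc : (t.card : ℝ) = t'.card + 1 := by
        rw [ht, card_insert_of_notMem hvnot, card_image_of_injective _ Subtype.val_injective]
        push_cast; ring
      refine ⟨t, ?_, ?_⟩
      · intro a ha b hb hab
        simp only [ht, coe_insert, Set.mem_insert_iff, coe_image, Set.mem_image, mem_coe] at ha hb
        rcases ha with rfl | ⟨x, hx, rfl⟩
        · rcases hb with rfl | ⟨y, hy, rfl⟩
          · exact absurd rfl hab
          · exact (SimpleGraph.mem_neighborFinset _ _ _).mp y.2
        · rcases hb with rfl | ⟨y, hy, rfl⟩
          · exact ((SimpleGraph.mem_neighborFinset _ _ _).mp x.2).symm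
          · exact ht'c hx hy (fun h => hab (congrArg Subtype.val h))
      · -- the sum bound
        have hsplit : ∑ u : V, (1 : ℝ) / ((Fintype.card V : ℝ) - (G.degree u : ℝ)) =
            (∑ u ∈ s, (1 : ℝ) / ((Fintype.card V : ℝ) - (G.degree u : ℝ))) +
            (∑ u ∈ sᶜ, (1 : ℝ) / ((Fintype.card V : ℝ) - (G.degree u : ℝ))) :=
          (Finset.sum_add_sum_compl s _).symm
        have hB : ∑ u ∈ sᶜ, (1 : ℝ) / ((Fintype.card V : ℝ) - (G.degree u : ℝ)) ≤ 1 := by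
          have hpos : (0 : ℝ) < (n : ℝ) - (G.degree v : ℝ) := by
            have h := hdlt v
            have h2 : (G.degree v : ℝ) < (n : ℝ) := by exact_mod_cast h
            linarith
          have hterm : ∀ u ∈ sᶜ, (1 : ℝ) / ((Fintype.card V : ℝ) - (G.degree u : ℝ)) ≤
              1 / ((n : ℝ) - (G.degree v : ℝ)) := by
            intro u _
            rw [hn]
            apply one_div_le_one_div_of_le hpos
            have := hv u (mem_univ u)
            have : (G.degree u : ℝ) ≤ (G.degree v : ℝ) := by exact_mod_cast this
            linarith
          calc ∑ u ∈ sᶜ, (1 : ℝ) / ((Fintype.card V : ℝ) - (G.degree u : ℝ))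
              ≤ ∑ _u ∈ sᶜ, 1 / ((n : ℝ) - (G.degree v : ℝ)) := Finset.sum_le_sum hterm
            _ = (sᶜ.card : ℝ) * (1 / ((n : ℝ) - (G.degree v : ℝ))) := by
                rw [Finset.sum_const, nsmul_eq_mul]
            _ = 1 := by
                rw [card_compl, hn, Nat.cast_sub hslt.le, hsd]
                rw [mul_one_div, div_self (ne_of_gt hpos)]
        have hA : ∑ u ∈ s, (1 : ℝ) / ((Fintype.card V : ℝ) - (G.degree u : ℝ)) ≤
            (t'.card : ℝ) := by
          refine le_trans ?_ ht's
          rw [← Finset.sum_coe_sort s]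
          apply Finset.sum_le_sum
          intro x _
          have hpos : (0 : ℝ) < (Fintype.card {a // a ∈ s} : ℝ) - (H.degree x : ℝ) := by
            have := hHlt x
            rw [hcard]
            have : (H.degree x : ℝ) < (s.card : ℝ) := by exact_mod_cast this
            linarith
          apply one_div_le_one_div_of_le hpos
          have := hkey x
          rw [hcard, hn]
          have h1 : (G.degree x.val : ℝ) + (s.card : ℝ) ≤ (H.degree x : ℝ) + (n : ℝ) := by
            exact_mod_cast this
          linarith
        rw [hsplit, htc]
        linarith

/-- Caro–Wei theorem: a finite simple graph without loops contains a clique of size at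
least `Σ_{v∈V} 1/(|V| − d_v)`, where `d_v` is the degree of vertex `v`. -/
theorem caro_wei_clique_bound {V : Type*} [Fintype V] [DecidableEq V]
    (G : SimpleGraph V) [DecidableRel G.Adj] :
    ∃ t : Finset V, G.IsClique (t : Set V) ∧
      ∑ v : V, (1 : ℝ) / ((Fintype.card V : ℝ) - (G.degree v : ℝ)) ≤ (t.card : ℝ) := by
  exact caro_wei_aux (Fintype.card V) G rfl
end

section
/- Let q ≥ 2 and m ≥ 1 be integers and let C ⊆ Q^m be a nonempty code with distance enumerator polynomial B(x). Then for every δ ∈ (0, 1 − 1/q) and every x ∈ (0,1], one has (1/m)·log_q(|C|/B(x)) + δ·log_q x ≤ 1 − h_q(δ); that is, the largest lower bound obtainable from the generalized Gilbert–Varshamov bound is the asymptotic Gilbert–Varshamov bound 1 − h_q(δ). -/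
open Finset

/-- The `q`-ary entropy function `h_q(x)`. -/
noncomputable def entq (q : ℕ) (x : ℝ) : ℝ :=
  -x * Real.logb q x - (1 - x) * Real.logb q (1 - x) + x * Real.logb q ((q : ℝ) - 1)

-- Fiber counting bound: N_S ≥ |C|²/q^|S|
lemma fiber_bound (q m : ℕ) (hq : 2 ≤ q) (C : Finset (Fin m → Fin q)) (hC : C.Nonempty)
    (S : Finset (Fin m)) :
    (C.card : ℝ)^2 / (q:ℝ)^S.card ≤
      ∑ p ∈ C ×ˢ C, (if ∀ i ∈ S, p.1 i = p.2 i then (1:ℝ) else 0) := by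
  classical
  haveI : NeZero q := ⟨by omega⟩
  set P : (Fin m → Fin q) → (Fin m → Fin q) := fun u i => if i ∈ S then u i else 0 with hP
  have hcond : ∀ u v : Fin m → Fin q, ((∀ i ∈ S, u i = v i) ↔ P u = P v) := by
    intro u v
    constructor
    · intro h; funext i
      by_cases hi : i ∈ S
      · simp [hP, hi, h i hi]
      · simp [hP, hi]
    · intro h i hi
      have := congrFun h i
      simpa [hP, hi] using this
  set T := C.image P with hT
  have hmaps : ∀ u ∈ C, P u ∈ T := fun u hu => mem_image_of_mem _ hu
  set n : (Fin m → Fin q) → ℝ := fun w => ((C.filter fun u => P u = w).card : ℝ) with hn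
  -- the sum equals ∑_{w∈T} n w ^ 2
  have hsum : ∑ p ∈ C ×ˢ C, (if ∀ i ∈ S, p.1 i = p.2 i then (1:ℝ) else 0)
      = ∑ w ∈ T, n w ^ 2 := by
    rw [Finset.sum_product]
    have h1 : ∀ u ∈ C, ∑ v ∈ C, (if ∀ i ∈ S, u i = v i then (1:ℝ) else 0) = n (P u) := by
      intro u hu
      simp only [hn]
      rw [← Finset.sum_boole]
      apply Finset.sum_congr rfl
      intro v hv
      simp only [hcond u v, eq_comm]
    rw [Finset.sum_congr rfl h1, ← Finset.sum_fiberwise_of_maps_to hmaps (fun u => n (P u))]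
    apply Finset.sum_congr rfl
    intro w hw
    have : ∀ u ∈ C.filter (fun u => P u = w), n (P u) = n w := by
      intro u hu
      rw [(Finset.mem_filter.mp hu).2]
    rw [Finset.sum_congr rfl this, Finset.sum_const, nsmul_eq_mul, sq]
  -- Cauchy-Schwarz
  have hCS : ((C.card : ℝ))^2 ≤ (T.card : ℝ) * ∑ w ∈ T, n w ^ 2 := by
    have h2 : (C.card : ℝ) = ∑ w ∈ T, n w := by
      rw [hn, Finset.card_eq_sum_card_fiberwise hmaps]; push_cast; rfl
    calc ((C.card : ℝ))^2 = (∑ w ∈ T, n w)^2 := by rw [h2]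
      _ ≤ (T.card : ℝ) * ∑ w ∈ T, n w ^ 2 := by
          exact sq_sum_le_card_mul_sum_sq
  -- |T| ≤ q^|S|
  have hTcard : (T.card : ℝ) ≤ (q:ℝ)^S.card := by
    have hsub : T ⊆ Fintype.piFinset (fun i => if i ∈ S then (univ : Finset (Fin q)) else {0}) := by
      intro w hw
      obtain ⟨u, _, rfl⟩ := Finset.mem_image.mp hw
      rw [Fintype.mem_piFinset]
      intro i
      by_cases hi : i ∈ S <;> simp [hP, hi]
    have := Finset.card_le_card hsub
    have hcardpi : (Fintype.piFinset (fun i => if i ∈ S then (univ : Finset (Fin q)) else {0})).card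
        = q ^ S.card := by
      rw [Fintype.card_piFinset]
      have : ∀ i : Fin m, (if i ∈ S then (univ : Finset (Fin q)) else {0}).card
          = if i ∈ S then q else 1 := by
        intro i; split_ifs <;> simp
      simp_rw [this]
      rw [Finset.prod_ite_mem, Finset.univ_inter, Finset.prod_const]
    rw [hcardpi] at this
    exact_mod_cast this
  rw [hsum]
  have hqpos : (0:ℝ) < (q:ℝ)^S.card := by positivity
  rw [div_le_iff₀ hqpos]
  have hnn : 0 ≤ ∑ w ∈ T, n w ^ 2 := Finset.sum_nonneg fun w _ => sq_nonneg _
  calc ((C.card:ℝ))^2 ≤ (T.card : ℝ) * ∑ w ∈ T, n w ^ 2 := hCS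
    _ ≤ (q:ℝ)^S.card * ∑ w ∈ T, n w ^ 2 := by
        exact mul_le_mul_of_nonneg_right hTcard hnn
    _ = (∑ w ∈ T, n w ^ 2) * (q:ℝ)^S.card := by ring

lemma sum_pow_ge (q m : ℕ) (hq : 2 ≤ q) (C : Finset (Fin m → Fin q)) (hC : C.Nonempty)
    (x : ℝ) (hx0 : 0 < x) (hx1 : x ≤ 1) :
    (C.card : ℝ)^2 * ((1 + ((q:ℝ)-1)*x)/q)^m ≤ ∑ p ∈ C ×ˢ C, x ^ hammingDist p.1 p.2 := by
  classical
  have hq0 : (0:ℝ) < q := by positivity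
  -- expand x^d as a product
  have hexp : ∀ u v : Fin m → Fin q, (x:ℝ) ^ hammingDist u v
      = ∏ i : Fin m, ((1-x) * (if u i = v i then (1:ℝ) else 0) + x) := by
    intro u v
    have h1 : ∀ i : Fin m, (1-x) * (if u i = v i then (1:ℝ) else 0) + x
        = if u i = v i then (1:ℝ) else x := by
      intro i; split_ifs <;> ring
    simp_rw [h1]
    rw [Finset.prod_ite (fun _ => (1:ℝ)) (fun _ => x), Finset.prod_const,
      Finset.prod_const, one_pow, one_mul]
    congr 1
  -- binomial expansion over subsets
  have hexp2 : ∀ u v : Fin m → Fin q, (x:ℝ) ^ hammingDist u v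
      = ∑ S ∈ (univ : Finset (Fin m)).powerset,
          (1-x)^S.card * x^(m - S.card) * (if ∀ i ∈ S, u i = v i then (1:ℝ) else 0) := by
    intro u v
    rw [hexp u v, Finset.prod_add]
    apply Finset.sum_congr rfl
    intro S hS
    rw [Finset.prod_mul_distrib, Finset.prod_const, Finset.prod_const, Finset.prod_boole]
    rw [Finset.card_sdiff_of_subset (Finset.mem_powerset.mp hS), Finset.card_univ, Fintype.card_fin]
    ring
  have hswap : ∑ p ∈ C ×ˢ C, x ^ hammingDist p.1 p.2
      = ∑ S ∈ (univ : Finset (Fin m)).powerset,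
          (1-x)^S.card * x^(m - S.card) *
            ∑ p ∈ C ×ˢ C, (if ∀ i ∈ S, p.1 i = p.2 i then (1:ℝ) else 0) := by
    simp_rw [hexp2, Finset.mul_sum]
    rw [Finset.sum_comm]
  rw [hswap]
  -- RHS expansion
  have hrhs : (C.card : ℝ)^2 * ((1 + ((q:ℝ)-1)*x)/q)^m
      = ∑ S ∈ (univ : Finset (Fin m)).powerset,
          (1-x)^S.card * x^(m - S.card) * ((C.card : ℝ)^2 / (q:ℝ)^S.card) := by
    have h3 : ((1 + ((q:ℝ)-1)*x)/q) = (1-x)/q + x := by field_simp; ring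
    have h4 : ((1-x)/(q:ℝ) + x)^m = ∏ _i : Fin m, ((1-x)/(q:ℝ) + x) := by
      rw [Finset.prod_const, Finset.card_univ, Fintype.card_fin]
    rw [h3, h4, Finset.prod_add, Finset.mul_sum]
    apply Finset.sum_congr rfl
    intro S hS
    rw [Finset.prod_const, Finset.prod_const, div_pow,
      Finset.card_sdiff_of_subset (Finset.mem_powerset.mp hS), Finset.card_univ, Fintype.card_fin]
    ring
  rw [hrhs]
  apply Finset.sum_le_sum
  intro S _
  have h1x : (0:ℝ) ≤ 1 - x := by linarith
  have hnn : (0:ℝ) ≤ (1-x)^S.card * x^(m - S.card) := by positivity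
  exact mul_le_mul_of_nonneg_left (fiber_bound q m hq C hC S) hnn

lemma entropy_bound (q : ℕ) (hq : 2 ≤ q) (δ x : ℝ) (hδ0 : 0 < δ) (hδ1 : δ < 1 - 1/(q:ℝ))
    (hx0 : 0 < x) :
    entq q δ + δ * Real.logb q x ≤ Real.logb q (1 + ((q:ℝ)-1)*x) := by
  have hq1 : (1:ℝ) < q := by exact_mod_cast Nat.lt_of_lt_of_le one_lt_two hq
  have hqinv : 0 < 1/(q:ℝ) := by positivity
  have hδlt1 : δ < 1 := by linarith
  have h1δ : 0 < 1 - δ := by linarith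
  have hq1' : (0:ℝ) < (q:ℝ) - 1 := by linarith
  set a : ℝ := ((q:ℝ)-1) * x / δ with ha
  set b : ℝ := (1-δ)⁻¹ with hb
  have ha0 : 0 < a := by positivity
  have hb0 : 0 < b := by positivity
  have hAM : a ^ δ * b ^ (1-δ) ≤ δ * a + (1-δ) * b :=
    Real.geom_mean_le_arith_mean2_weighted hδ0.le h1δ.le ha0.le hb0.le (by ring)
  have hsum : δ * a + (1-δ) * b = 1 + ((q:ℝ)-1)*x := by
    rw [ha, hb]
    field_simp
    ring
  have hlhs0 : 0 < a ^ δ * b ^ (1-δ) := by positivity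
  have hlog : Real.log (a ^ δ * b ^ (1-δ)) ≤ Real.log (1 + ((q:ℝ)-1)*x) := by
    apply Real.log_le_log hlhs0
    rw [← hsum]; exact hAM
  have hexpand : Real.log (a ^ δ * b ^ (1-δ))
      = δ * (Real.log ((q:ℝ)-1) + Real.log x - Real.log δ) - (1-δ) * Real.log (1-δ) := by
    rw [Real.log_mul (by positivity) (by positivity), Real.log_rpow ha0, Real.log_rpow hb0,
      ha, hb, Real.log_div (by positivity) (by positivity),
      Real.log_mul (by positivity) (by positivity), Real.log_inv]
    ring
  rw [hexpand] at hlog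
  have hL : 0 < Real.log q := Real.log_pos hq1
  have key : (-δ * Real.log δ - (1-δ) * Real.log (1-δ) + δ * Real.log ((q:ℝ)-1)) + δ * Real.log x
      ≤ Real.log (1 + ((q:ℝ)-1)*x) := by linarith
  calc entq q δ + δ * Real.logb q x
      = ((-δ * Real.log δ - (1-δ) * Real.log (1-δ) + δ * Real.log ((q:ℝ)-1)) + δ * Real.log x)
          / Real.log q := by
        simp only [entq, Real.logb]
        ring
    _ ≤ Real.log (1 + ((q:ℝ)-1)*x) / Real.log q := by gcongr
    _ = Real.logb q (1 + ((q:ℝ)-1)*x) := rfl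

/-- The generalized GV bound never beats the asymptotic GV bound `1 − h_q(δ)`. -/
theorem generalized_GV_le_asymptotic_GV (q m : ℕ) (hq : 2 ≤ q) (hm : 1 ≤ m)
    (C : Finset (Fin m → Fin q)) (hC : C.Nonempty)
    (δ : ℝ) (hδ : δ ∈ Set.Ioo (0 : ℝ) (1 - 1 / (q : ℝ)))
    (x : ℝ) (hx : x ∈ Set.Ioc (0 : ℝ) 1) :
    (1 / (m : ℝ)) * Real.logb q ((C.card : ℝ) / distEnum q m C x) + δ * Real.logb q x
      ≤ 1 - entq q δ := by
  simp only [distEnum]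
  obtain ⟨hδ0, hδ1⟩ := hδ
  obtain ⟨hx0, hx1⟩ := hx
  have hq1 : (1:ℝ) < q := by exact_mod_cast Nat.lt_of_lt_of_le one_lt_two hq
  have hq0 : (0:ℝ) < q := by linarith
  have hq1' : (0:ℝ) < (q:ℝ) - 1 := by linarith
  set z : ℝ := 1 + ((q:ℝ)-1)*x with hz
  have hz0 : 0 < z := by positivity
  have hcard : (0:ℝ) < C.card := by exact_mod_cast Finset.card_pos.mpr hC
  set B : ℝ := (C.card : ℝ)⁻¹ * ∑ p ∈ C ×ˢ C, x ^ hammingDist p.1 p.2 with hBdef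
  have hsum := sum_pow_ge q m hq C hC x hx0 hx1
  have hzq0 : (0:ℝ) < (z/q)^m := by positivity
  have hB : (C.card : ℝ) * (z/q)^m ≤ B := by
    have heq : (C.card:ℝ) * (z/q)^m = (C.card:ℝ)⁻¹ * ((C.card:ℝ)^2 * (z/q)^m) := by
      field_simp
    rw [hBdef, heq]
    exact mul_le_mul_of_nonneg_left hsum (by positivity)
  have hBpos : 0 < B := lt_of_lt_of_le (by positivity) hB
  have hratio : (C.card : ℝ) / B ≤ ((q:ℝ)/z)^m := by
    have h1 : (C.card : ℝ) / B ≤ (C.card : ℝ) / ((C.card : ℝ) * (z/q)^m) :=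
      div_le_div_of_nonneg_left hcard.le (by positivity) hB
    have h2 : (C.card : ℝ) / ((C.card : ℝ) * (z/q)^m) = ((q:ℝ)/z)^m := by
      rw [div_pow, div_pow]
      field_simp
    linarith
  have hlog : Real.logb q ((C.card : ℝ) / B) ≤ (m:ℝ) * (1 - Real.logb q z) := by
    have h3 : Real.logb q ((C.card : ℝ) / B) ≤ Real.logb q (((q:ℝ)/z)^m) :=
      Real.logb_le_logb_of_le hq1 (by positivity) hratio
    have h4 : Real.logb q (((q:ℝ)/z)^m) = (m:ℝ) * (1 - Real.logb q z) := by
      rw [Real.logb_pow, Real.logb_div (by positivity) (by positivity),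
        Real.logb_self_eq_one hq1]
    linarith
  have hm0 : (0:ℝ) < m := by exact_mod_cast hm
  have h5 : (1 / (m : ℝ)) * Real.logb q ((C.card : ℝ) / B) ≤ 1 - Real.logb q z := by
    have := mul_le_mul_of_nonneg_left hlog (by positivity : (0:ℝ) ≤ 1/(m:ℝ))
    calc (1 / (m : ℝ)) * Real.logb q ((C.card : ℝ) / B)
        ≤ (1 / (m : ℝ)) * ((m:ℝ) * (1 - Real.logb q z)) := this
      _ = 1 - Real.logb q z := by field_simp
  have h6 := entropy_bound q hq δ x hδ0 hδ1 hx0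
  rw [← hz] at h6
  linarith
end

section
/- Let q ≥ 2, m ≥ 1, n ≥ 1 be integers, let C ⊆ Q^m be a nonempty code, and let d be an integer with 1 ≤ d ≤ mn. Then for every real x with 0 < x ≤ 1 there exists a subcode D ⊆ C^n ⊆ Q^{mn} whose distinct codewords have pairwise Hamming distance at least d and whose cardinality satisfies |D| ≥ x^d · ( Σ_{c∈C} 1/B_c(x) )^n. -/
open Finset

/-- The local distance enumerator `B_c(x) = Σ_j |{y ∈ C : d(c,y) = j}| x^j` of `c` in `C`. -/
noncomputable def localDistEnum (q m : ℕ) (C : Finset (Fin m → Fin q))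
    (c : Fin m → Fin q) (x : ℝ) : ℝ :=
  ∑ y ∈ C, x ^ hammingDist c y

/-- Caro–Wei style greedy lemma. -/
lemma caroWei {α : Type*} [DecidableEq α] (r : α → α → Prop) [DecidableRel r]
    (hsymm : ∀ a b, r a b → r b a) (S : Finset α) :
    ∃ D : Finset α, D ⊆ S ∧ (∀ u ∈ D, ∀ v ∈ D, u ≠ v → ¬ r u v) ∧
      ∑ w ∈ S, (1 : ℝ) / ((S.filter fun v => r w v ∨ v = w).card) ≤ D.card := by
  induction S using Finset.strongInduction with
  | _ S ih =>
    rcases S.eq_empty_or_nonempty with rfl | hS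
    · exact ⟨∅, by simp⟩
    · obtain ⟨w, hwS, hwmin⟩ :=
        S.exists_min_image (fun v => ((S.filter fun u => r v u ∨ u = v).card : ℝ)) hS
      set Nb := S.filter (fun v => r w v ∨ v = w) with hNb
      have hwNb : w ∈ Nb := by simp [hNb, hwS]
      set S' := S \ Nb with hS'
      have hssub : S' ⊂ S := by
        refine Finset.ssubset_iff_of_subset (Finset.sdiff_subset) |>.mpr ?_
        exact ⟨w, hwS, by simp [hS', hwNb]⟩
      obtain ⟨D', hD'sub, hD'ind, hD'sum⟩ := ih S' hssub
      have hwS' : w ∉ S' := by simp [hS', hwNb]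
      have hwD' : w ∉ D' := fun h => hwS' (hD'sub h)
      refine ⟨insert w D', ?_, ?_, ?_⟩
      · intro u hu
        rcases Finset.mem_insert.mp hu with rfl | hu
        · exact hwS
        · exact Finset.sdiff_subset (hD'sub hu)
      · intro u hu v hv huv hr
        rcases Finset.mem_insert.mp hu with hu' | hu' <;>
          rcases Finset.mem_insert.mp hv with hv' | hv'
        · exact huv (hu'.trans hv'.symm)
        · have hv2 : v ∈ S' := hD'sub hv'
          rw [hS', Finset.mem_sdiff] at hv2
          exact hv2.2 (Finset.mem_filter.mpr ⟨hv2.1, Or.inl (hu' ▸ hr)⟩)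
        · have hu2 : u ∈ S' := hD'sub hu'
          rw [hS', Finset.mem_sdiff] at hu2
          exact hu2.2 (Finset.mem_filter.mpr ⟨hu2.1, Or.inl (hsymm _ _ (hv' ▸ hr))⟩)
        · exact hD'ind u hu' v hv' huv hr
      · have hsplit : ∑ v ∈ S, (1:ℝ) / ((S.filter fun u => r v u ∨ u = v).card)
            = ∑ v ∈ S', (1:ℝ) / ((S.filter fun u => r v u ∨ u = v).card)
              + ∑ v ∈ Nb, (1:ℝ) / ((S.filter fun u => r v u ∨ u = v).card) := by
          rw [hS', Finset.sum_sdiff (Finset.filter_subset _ _)]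
        have hNbpos : (0:ℝ) < Nb.card := by
          exact_mod_cast Finset.card_pos.mpr ⟨w, hwNb⟩
        have h1 : ∑ v ∈ Nb, (1:ℝ) / ((S.filter fun u => r v u ∨ u = v).card) ≤ 1 := by
          have hb : ∀ v ∈ Nb, (1:ℝ) / ((S.filter fun u => r v u ∨ u = v).card)
              ≤ 1 / Nb.card := by
            intro v hv
            have hvS : v ∈ S := Finset.mem_of_mem_filter _ hv
            exact one_div_le_one_div_of_le hNbpos (hwmin v hvS)
          calc ∑ v ∈ Nb, (1:ℝ) / ((S.filter fun u => r v u ∨ u = v).card)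
              ≤ ∑ _v ∈ Nb, (1:ℝ) / Nb.card := Finset.sum_le_sum hb
            _ = Nb.card * (1 / Nb.card) := by rw [Finset.sum_const, nsmul_eq_mul]
            _ = 1 := by field_simp
        have h2 : ∑ v ∈ S', (1:ℝ) / ((S.filter fun u => r v u ∨ u = v).card)
            ≤ ∑ v ∈ S', (1:ℝ) / ((S'.filter fun u => r v u ∨ u = v).card) := by
          refine Finset.sum_le_sum fun v hv => ?_
          have hpos : 0 < (S'.filter fun u => r v u ∨ u = v).card :=
            Finset.card_pos.mpr ⟨v, Finset.mem_filter.mpr ⟨hv, Or.inr rfl⟩⟩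
          have hle : (S'.filter fun u => r v u ∨ u = v).card
              ≤ (S.filter fun u => r v u ∨ u = v).card :=
            Finset.card_le_card (Finset.filter_subset_filter _ (Finset.sdiff_subset))
          exact one_div_le_one_div_of_le (by exact_mod_cast hpos) (by exact_mod_cast hle)
        have hcard : ((insert w D').card : ℝ) = D'.card + 1 := by
          rw [Finset.card_insert_of_notMem hwD']; push_cast; ring
        rw [hsplit, hcard]
        linarith [hD'sum]

lemma hammingDist_split {q m n : ℕ} (w v : Fin n × Fin m → Fin q) :
    hammingDist w v = ∑ i : Fin n, hammingDist (fun j => w (i, j)) (fun j => v (i, j)) := by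
  simp only [hammingDist, Finset.card_filter, Fintype.sum_prod_type]

lemma sum_codePow {q m n : ℕ} (C : Finset (Fin m → Fin q)) (f : (Fin n × Fin m → Fin q) → ℝ) :
    ∑ w ∈ codePow q m n C, f w
      = ∑ g ∈ Fintype.piFinset (fun _ : Fin n => C), f (fun p => g p.1 p.2) := by
  refine Finset.sum_nbij' (fun w => fun i j => w (i, j)) (fun g => fun p => g p.1 p.2)
    ?_ ?_ ?_ ?_ ?_
  · intro w hw
    simp only [codePow, Finset.mem_filter] at hw
    simp only [Fintype.mem_piFinset]
    exact hw.2
  · intro g hg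
    simp only [Fintype.mem_piFinset] at hg
    simp only [codePow, Finset.mem_filter, Finset.mem_univ, true_and]
    exact hg
  · intro w hw; funext p; rfl
  · intro g hg; rfl
  · intro w hw; rfl

lemma localDistEnum_pos {q m : ℕ} (C : Finset (Fin m → Fin q)) (hC : C.Nonempty)
    (c : Fin m → Fin q) {x : ℝ} (hx0 : 0 < x) : 0 < localDistEnum q m C c x :=
  Finset.sum_pos (fun y _ => pow_pos hx0 _) hC

theorem exists_subcode_of_codePow_caro_wei (q m n : ℕ) (hq : 2 ≤ q) (hm : 1 ≤ m)
    (hn : 1 ≤ n) (C : Finset (Fin m → Fin q)) (hC : C.Nonempty)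
    (d : ℕ) (hd1 : 1 ≤ d) (hd2 : d ≤ m * n)
    (x : ℝ) (hx0 : 0 < x) (hx1 : x ≤ 1) :
    ∃ D : Finset (Fin n × Fin m → Fin q), D ⊆ codePow q m n C ∧
      (∀ u ∈ D, ∀ v ∈ D, u ≠ v → d ≤ hammingDist u v) ∧
      x ^ d * (∑ c ∈ C, 1 / localDistEnum q m C c x) ^ n ≤ (D.card : ℝ) := by
  classical
  set S := codePow q m n C with hSdef
  set r : (Fin n × Fin m → Fin q) → (Fin n × Fin m → Fin q) → Prop :=
    fun u v => hammingDist u v < d ∧ u ≠ v with hr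
  have hsymm : ∀ a b, r a b → r b a := by
    intro a b ⟨h1, h2⟩; exact ⟨hammingDist_comm b a ▸ h1, h2.symm⟩
  obtain ⟨D, hDS, hind, hsum⟩ := caroWei r hsymm S
  refine ⟨D, hDS, ?_, ?_⟩
  · intro u hu v hv huv
    by_contra h
    push_neg at h
    exact hind u hu v hv huv ⟨h, huv⟩
  · -- closed neighborhood condition simplifies to hammingDist < d
    have hcond : ∀ w v : Fin n × Fin m → Fin q, (r w v ∨ v = w) ↔ hammingDist w v < d := by
      intro w v
      constructor
      · rintro (⟨h, _⟩ | rfl)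
        · exact h
        · simpa [hammingDist_self] using Nat.lt_of_lt_of_le Nat.zero_lt_one hd1
      · intro h
        by_cases hv : v = w
        · exact Or.inr hv
        · exact Or.inl ⟨h, fun e => hv e.symm⟩
    -- key product formula
    have key1 : ∀ w : Fin n × Fin m → Fin q, ∑ v ∈ S, x ^ hammingDist w v
        = ∏ i : Fin n, localDistEnum q m C (fun j => w (i, j)) x := by
      intro w
      rw [hSdef, sum_codePow]
      simp only [localDistEnum]
      rw [Finset.prod_univ_sum]
      refine Finset.sum_congr rfl fun g hg => ?_
      rw [hammingDist_split, ← Finset.prod_pow_eq_pow_sum]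
    have key2 : ∑ w ∈ S, ∏ i : Fin n, (1 / localDistEnum q m C (fun j => w (i, j)) x)
        = (∑ c ∈ C, 1 / localDistEnum q m C c x) ^ n := by
      rw [hSdef, sum_codePow C
        (fun w => ∏ i : Fin n, (1 / localDistEnum q m C (fun j => w (i, j)) x))]
      have heta : ∑ g ∈ Fintype.piFinset (fun _ : Fin n => C),
            ∏ i : Fin n, (1 / localDistEnum q m C (fun j => (fun p => g p.1 p.2) (i, j)) x)
          = ∑ g ∈ Fintype.piFinset (fun _ : Fin n => C),
            ∏ i : Fin n, (1 / localDistEnum q m C (g i) x) := rfl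
      have hps := Finset.prod_univ_sum (fun _ : Fin n => C)
        (fun (_ : Fin n) (c : Fin m → Fin q) => 1 / localDistEnum q m C c x)
      rw [heta, ← hps]
      simp [Finset.prod_const]
    have hBpos : ∀ w : Fin n × Fin m → Fin q, 0 < ∏ i : Fin n, localDistEnum q m C (fun j => w (i, j)) x :=
      fun w => Finset.prod_pos fun i _ => localDistEnum_pos C hC _ hx0
    -- per-vertex bound
    have hper : ∀ w ∈ S, x ^ (d - 1) * ∏ i : Fin n, (1 / localDistEnum q m C (fun j => w (i, j)) x)
        ≤ 1 / ((S.filter fun v => r w v ∨ v = w).card : ℝ) := by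
      intro w hw
      set N := S.filter fun v => r w v ∨ v = w with hNdef
      have hNeq : N = S.filter fun v => hammingDist w v < d := by
        apply Finset.filter_congr
        intro v _; simp only [hcond, eq_iff_iff]
      have hwN : w ∈ N := by
        rw [hNeq, Finset.mem_filter]
        exact ⟨hw, by simpa [hammingDist_self] using Nat.lt_of_lt_of_le Nat.zero_lt_one hd1⟩
      have hNpos : (0:ℝ) < N.card := by exact_mod_cast Finset.card_pos.mpr ⟨w, hwN⟩
      have hstep : x ^ (d - 1) * N.card ≤ ∏ i : Fin n, localDistEnum q m C (fun j => w (i, j)) x := by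
        rw [← key1 w]
        calc x ^ (d - 1) * (N.card : ℝ) = ∑ _v ∈ N, x ^ (d - 1) := by
              rw [Finset.sum_const, nsmul_eq_mul]; ring
          _ ≤ ∑ v ∈ N, x ^ hammingDist w v := by
              refine Finset.sum_le_sum fun v hv => ?_
              rw [hNeq, Finset.mem_filter] at hv
              exact pow_le_pow_of_le_one hx0.le hx1 (Nat.le_sub_one_of_lt hv.2)
          _ ≤ ∑ v ∈ S, x ^ hammingDist w v := by
              refine Finset.sum_le_sum_of_subset_of_nonneg (Finset.filter_subset _ _)
                fun v _ _ => (pow_pos hx0 _).le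
      have hprodinv : ∏ i : Fin n, (1 / localDistEnum q m C (fun j => w (i, j)) x)
          = 1 / ∏ i : Fin n, localDistEnum q m C (fun j => w (i, j)) x := by
        simp only [one_div]
        rw [← Finset.prod_inv_distrib]
      rw [hprodinv, mul_one_div, div_le_div_iff₀ (hBpos w) hNpos]
      linarith [hstep]
    -- assemble
    have hx_nonneg : (0:ℝ) ≤ ∑ c ∈ C, 1 / localDistEnum q m C c x :=
      Finset.sum_nonneg fun c _ => one_div_nonneg.mpr (localDistEnum_pos C hC c hx0).le
    have h1 : x ^ d * (∑ c ∈ C, 1 / localDistEnum q m C c x) ^ n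
        ≤ x ^ (d - 1) * (∑ c ∈ C, 1 / localDistEnum q m C c x) ^ n := by
      apply mul_le_mul_of_nonneg_right _ (pow_nonneg hx_nonneg n)
      exact pow_le_pow_of_le_one hx0.le hx1 (Nat.sub_le d 1)
    have h2 : x ^ (d - 1) * (∑ c ∈ C, 1 / localDistEnum q m C c x) ^ n
        ≤ ∑ w ∈ S, (1:ℝ) / ((S.filter fun v => r w v ∨ v = w).card) := by
      rw [← key2, Finset.mul_sum]
      exact Finset.sum_le_sum hper
    linarith [hsum]
end

section
/- Let q ≥ 2 and m ≥ 1 be integers and let C ⊆ Q^m be a nonempty code. Then there exist δ ∈ (0, 1 − 1/q) and x ∈ (0,1) with (1/m)·log_q( Σ_{c∈C} 1/B_c(x) ) + δ·log_q x > 1 − h_q(δ) if and only if there exists z ∈ (0,1) such that Σ_{c∈C} 1 / ( (1+(q−1)z)^m · B_c((1−z)/(1+(q−1)z)) ) > 1. -/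
open Finset

lemma ldE_pos (q m : ℕ) (C : Finset (Fin m → Fin q)) (hC : C.Nonempty)
    (c : Fin m → Fin q) {x : ℝ} (hx : 0 < x) : 0 < localDistEnum q m C c x :=
  Finset.sum_pos (fun _ _ => pow_pos hx _) hC

/-- Gibbs-type inequality: `entq q δ + δ log_q x ≤ log_q (1 + (q-1)x)`. -/
lemma gibbs_ineq (q : ℕ) (hq : 2 ≤ q) {δ x : ℝ} (hδ : δ ∈ Set.Ioo (0:ℝ) 1)
    (hx : x ∈ Set.Ioo (0:ℝ) 1) :
    entq q δ + δ * Real.logb q x ≤ Real.logb q (1 + ((q:ℝ) - 1) * x) := by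
  have hq1 : (1:ℝ) < q := by exact_mod_cast hq.trans_lt' one_lt_two
  have hlq : 0 < Real.log q := Real.log_pos hq1
  have hq1' : (0:ℝ) < (q:ℝ) - 1 := by linarith
  obtain ⟨hδ0, hδ1⟩ := hδ
  obtain ⟨hx0, hx1⟩ := hx
  have h1δ : 0 < 1 - δ := by linarith
  set a := ((q:ℝ) - 1) * x / δ with ha
  set b := (1 - δ)⁻¹ with hb
  have hapos : 0 < a := div_pos (mul_pos hq1' hx0) hδ0
  have hbpos : 0 < b := inv_pos.mpr h1δ
  have key := strictConcaveOn_log_Ioi.concaveOn.2 (Set.mem_Ioi.mpr hapos)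
    (Set.mem_Ioi.mpr hbpos) hδ0.le h1δ.le (by ring)
  rw [smul_eq_mul, smul_eq_mul, smul_eq_mul, smul_eq_mul] at key
  have hcomb : δ * a + (1 - δ) * b = 1 + ((q:ℝ)-1) * x := by
    rw [ha, hb]; field_simp; ring
  rw [hcomb] at key
  have hla : Real.log a = Real.log ((q:ℝ)-1) + Real.log x - Real.log δ := by
    rw [ha, Real.log_div (by positivity) hδ0.ne', Real.log_mul hq1'.ne' hx0.ne']
  have hlb : Real.log b = - Real.log (1 - δ) := by rw [hb, Real.log_inv]
  rw [hla, hlb] at key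
  have hrw : entq q δ + δ * Real.logb q x =
      (δ * (Real.log ((q:ℝ)-1) + Real.log x - Real.log δ)
        + (1 - δ) * (-Real.log (1 - δ))) / Real.log q := by
    unfold entq Real.logb; ring
  rw [hrw, Real.logb]
  exact div_le_div_of_nonneg_right key hlq.le |>.trans_eq rfl

/-- Equality at the optimal `δ = (q-1)x/(1+(q-1)x)`. -/
lemma ent_eq (q : ℕ) (hq : 2 ≤ q) {x : ℝ} (hx : x ∈ Set.Ioo (0:ℝ) 1) :
    entq q (((q:ℝ)-1)*x/(1+((q:ℝ)-1)*x))
      + (((q:ℝ)-1)*x/(1+((q:ℝ)-1)*x)) * Real.logb q x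
      = Real.logb q (1+((q:ℝ)-1)*x) := by
  have hq1' : (0:ℝ) < (q:ℝ) - 1 := by
    have : (2:ℝ) ≤ q := by exact_mod_cast hq
    linarith
  obtain ⟨hx0, hx1⟩ := hx
  have hs : (0:ℝ) < 1 + ((q:ℝ)-1)*x := by positivity
  set s := 1 + ((q:ℝ)-1)*x with hsdef
  set δ := ((q:ℝ)-1)*x/s with hδdef
  have h1δ : 1 - δ = s⁻¹ := by rw [hδdef]; field_simp; ring
  have hlδ : Real.logb q δ = Real.logb q ((q:ℝ)-1) + Real.logb q x - Real.logb q s := by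
    rw [hδdef, Real.logb_div (by positivity) hs.ne', Real.logb_mul hq1'.ne' hx0.ne']
  have hl1δ : Real.logb q (1 - δ) = - Real.logb q s := by
    rw [h1δ, Real.logb_inv]
  unfold entq
  rw [hlδ, hl1δ, h1δ]
  have : s⁻¹ = 1 - δ := h1δ.symm
  have hδ1 : δ = 1 - s⁻¹ := by rw [← h1δ]; ring
  rw [hδ1]
  have hsne : s ≠ 0 := hs.ne'
  field_simp
  ring

/-- Bridge: the sum condition is equivalent to a logarithmic inequality. -/
lemma bridge (q m : ℕ) (hq : 2 ≤ q) (hm : 1 ≤ m) (C : Finset (Fin m → Fin q))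
    (hC : C.Nonempty) {x : ℝ} (hx : x ∈ Set.Ioo (0:ℝ) 1) {P : ℝ} (hP : 0 < P) :
    (1 < ∑ c ∈ C, 1 / (P ^ m * localDistEnum q m C c x)) ↔
      Real.logb q P < (1/(m:ℝ)) * Real.logb q (∑ c ∈ C, 1 / localDistEnum q m C c x) := by
  have hq1 : (1:ℝ) < q := by exact_mod_cast hq.trans_lt' one_lt_two
  have hm0 : (0:ℝ) < m := by exact_mod_cast hm.trans_lt' zero_lt_one
  have hS : 0 < ∑ c ∈ C, 1 / localDistEnum q m C c x :=
    Finset.sum_pos (fun c _ => by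
      have := ldE_pos q m C hC c hx.1
      positivity) hC
  have hPm : 0 < P ^ m := pow_pos hP m
  have hfact : ∑ c ∈ C, 1 / (P ^ m * localDistEnum q m C c x)
      = (∑ c ∈ C, 1 / localDistEnum q m C c x) / P ^ m := by
    rw [Finset.sum_div]
    congr 1; funext c
    rw [div_div, mul_comm]
  rw [hfact, one_lt_div hPm]
  rw [← Real.logb_lt_logb_iff hq1 hPm hS, Real.logb_pow]
  rw [show (1/(m:ℝ)) * Real.logb q (∑ c ∈ C, 1 / localDistEnum q m C c x)
      = Real.logb q (∑ c ∈ C, 1 / localDistEnum q m C c x) / m by ring]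
  rw [lt_div_iff₀ hm0]
  constructor <;> intro h <;> nlinarith [h]

theorem improvement_condition_caro_wei (q m : ℕ) (hq : 2 ≤ q) (hm : 1 ≤ m)
    (C : Finset (Fin m → Fin q)) (hC : C.Nonempty) :
    (∃ δ ∈ Set.Ioo (0 : ℝ) (1 - 1 / (q : ℝ)), ∃ x ∈ Set.Ioo (0 : ℝ) 1,
        1 - entq q δ <
          (1 / (m : ℝ)) * Real.logb q (∑ c ∈ C, 1 / localDistEnum q m C c x)
            + δ * Real.logb q x) ↔
      (∃ z ∈ Set.Ioo (0 : ℝ) 1,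
        1 < ∑ c ∈ C, 1 / ((1 + ((q : ℝ) - 1) * z) ^ m
              * localDistEnum q m C c ((1 - z) / (1 + ((q : ℝ) - 1) * z)))) := by
  have hq1 : (1:ℝ) < q := by exact_mod_cast hq.trans_lt' one_lt_two
  have hq0 : (0:ℝ) < q := by linarith
  have hq1' : (0:ℝ) < (q:ℝ) - 1 := by
    have : (2:ℝ) ≤ q := by exact_mod_cast hq
    linarith
  constructor
  · rintro ⟨δ, hδ, x, hx, h⟩
    obtain ⟨hx0, hx1⟩ := hx
    have hs : (0:ℝ) < 1 + ((q:ℝ)-1)*x := by positivity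
    refine ⟨(1-x)/(1+((q:ℝ)-1)*x), ⟨div_pos (by linarith) hs, ?_⟩, ?_⟩
    · rw [div_lt_one hs]; nlinarith
    · set z := (1-x)/(1+((q:ℝ)-1)*x) with hzdef
      have hP : 1 + ((q:ℝ)-1)*z = q / (1+((q:ℝ)-1)*x) := by
        rw [hzdef]; field_simp; ring
      have hxz : (1-z)/(1+((q:ℝ)-1)*z) = x := by
        rw [hP, hzdef]; field_simp; ring
      rw [hxz, hP]
      rw [bridge q m hq hm C hC ⟨hx0, hx1⟩ (div_pos hq0 hs)]
      have hlogP : Real.logb q (q / (1+((q:ℝ)-1)*x))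
          = 1 - Real.logb q (1+((q:ℝ)-1)*x) := by
        rw [Real.logb_div hq0.ne' hs.ne', Real.logb_self_eq_one hq1]
      rw [hlogP]
      have hgibbs := gibbs_ineq q hq (x := x)
        ⟨hδ.1, lt_of_lt_of_le hδ.2 (by
          have : (0:ℝ) < 1/(q:ℝ) := by positivity
          linarith)⟩ ⟨hx0, hx1⟩
      linarith
  · rintro ⟨z, hz, h⟩
    obtain ⟨hz0, hz1⟩ := hz
    have hsz : (0:ℝ) < 1 + ((q:ℝ)-1)*z := by positivity
    set x := (1-z)/(1+((q:ℝ)-1)*z) with hxdef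
    have hx0 : 0 < x := div_pos (by linarith) hsz
    have hx1 : x < 1 := by rw [hxdef, div_lt_one hsz]; nlinarith
    have hs : (0:ℝ) < 1 + ((q:ℝ)-1)*x := by positivity
    set δ := ((q:ℝ)-1)*x/(1+((q:ℝ)-1)*x) with hδdef
    have hδ0 : 0 < δ := div_pos (mul_pos hq1' hx0) hs
    have hδ1 : δ < 1 - 1/(q:ℝ) := by
      rw [hδdef, div_lt_iff₀ hs]
      have : 1 - 1/(q:ℝ) = ((q:ℝ)-1)/q := by field_simp
      rw [this, div_mul_eq_mul_div, lt_div_iff₀ hq0]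
      nlinarith [mul_lt_mul_of_pos_left hx1 hq1']
    refine ⟨δ, ⟨hδ0, hδ1⟩, x, ⟨hx0, hx1⟩, ?_⟩
    have hP : 1 + ((q:ℝ)-1)*z = q / (1+((q:ℝ)-1)*x) := by
      rw [eq_div_iff hs.ne', hxdef]; field_simp; ring
    rw [hP] at h
    rw [bridge q m hq hm C hC ⟨hx0, hx1⟩ (div_pos hq0 hs)] at h
    have hlogP : Real.logb q (q / (1+((q:ℝ)-1)*x))
        = 1 - Real.logb q (1+((q:ℝ)-1)*x) := by
      rw [Real.logb_div hq0.ne' hs.ne', Real.logb_self_eq_one hq1]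
    rw [hlogP] at h
    have heq := ent_eq q hq (x := x) ⟨hx0, hx1⟩
    rw [← hδdef] at heq
    linarith
end

section
/- For all integers q ≥ 2 and 1 ≤ d ≤ n, one has A_q(n,d) ≥ q^n / Σ_{i=0}^{d−1} C(n,i)·(q−1)^i (the Gilbert–Varshamov bound). -/
open Finset

lemma sphere_card_le (q n : ℕ) (u : Fin n → Fin q) (i : ℕ) :
    ((univ : Finset (Fin n → Fin q)).filter fun y => hammingDist u y = i).card
      ≤ n.choose i * (q - 1) ^ i := by
  classical
  have hsub : ((univ : Finset (Fin n → Fin q)).filter fun y => hammingDist u y = i) ⊆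
      (Finset.powersetCard i (univ : Finset (Fin n))).biUnion
        (fun S => Fintype.piFinset fun j => if j ∈ S then (univ \ {u j}) else {u j}) := by
    intro y hy
    simp only [mem_filter, mem_univ, true_and] at hy
    refine mem_biUnion.2 ⟨univ.filter (fun j => y j ≠ u j), ?_, ?_⟩
    · rw [mem_powersetCard]
      refine ⟨subset_univ _, ?_⟩
      rw [← hy, hammingDist]
      congr 1
      ext j
      simp [ne_comm]
    · rw [Fintype.mem_piFinset]
      intro j
      by_cases h : y j = u j <;> simp [h]
  calc ((univ : Finset (Fin n → Fin q)).filter fun y => hammingDist u y = i).card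
      ≤ _ := card_le_card hsub
    _ ≤ ∑ S ∈ powersetCard i (univ : Finset (Fin n)), (q - 1) ^ i := by
        refine le_trans (card_biUnion_le) (Finset.sum_le_sum fun S hS => ?_)
        rw [mem_powersetCard] at hS
        rw [Fintype.card_piFinset]
        have : ∀ j, (if j ∈ S then (univ \ {u j}) else ({u j} : Finset (Fin q))).card
            = if j ∈ S then q - 1 else 1 := by
          intro j
          by_cases h : j ∈ S <;> simp [h, Finset.card_sdiff_of_subset (Finset.singleton_subset_iff.2 (mem_univ _))]
        simp_rw [this]
        rw [Finset.prod_ite_mem, Finset.univ_inter, Finset.prod_const, hS.2]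
    _ = n.choose i * (q - 1) ^ i := by
        rw [Finset.sum_const, Finset.card_powersetCard, Finset.card_univ, Fintype.card_fin,
          smul_eq_mul]

lemma ball_card_le (q n d : ℕ) (u : Fin n → Fin q) :
    ((univ : Finset (Fin n → Fin q)).filter fun y => hammingDist u y < d).card
      ≤ ∑ i ∈ Finset.range d, n.choose i * (q - 1) ^ i := by
  classical
  have hsub : ((univ : Finset (Fin n → Fin q)).filter fun y => hammingDist u y < d) ⊆
      (Finset.range d).biUnion
        (fun i => (univ : Finset (Fin n → Fin q)).filter fun y => hammingDist u y = i) := by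
    intro y hy
    simp only [mem_filter, mem_univ, true_and] at hy
    exact mem_biUnion.2 ⟨hammingDist u y, mem_range.2 hy, by simp⟩
  refine le_trans (card_le_card hsub) (le_trans card_biUnion_le ?_)
  exact Finset.sum_le_sum fun i _ => sphere_card_le q n u i

/-- The Gilbert–Varshamov bound:
`A_q(n,d) ≥ q^n / Σ_{i=0}^{d−1} C(n,i)·(q−1)^i`. -/
theorem gilbert_varshamov (q n d : ℕ) (hq : 2 ≤ q) (hd1 : 1 ≤ d) (hdn : d ≤ n) :
    (q : ℝ) ^ n / (∑ i ∈ Finset.range d, (n.choose i : ℝ) * ((q : ℝ) - 1) ^ i)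
      ≤ (Aq q n d : ℝ) := by
  classical
  set K : Set ℕ := {k : ℕ | ∃ C : Finset (Fin n → Fin q), minDistGE q n d C ∧ C.card = k}
  have hKne : K.Nonempty := ⟨0, ∅, fun u hu => absurd hu (notMem_empty u), card_empty⟩
  have hKbdd : BddAbove K := by
    refine ⟨Fintype.card (Fin n → Fin q), fun k hk => ?_⟩
    obtain ⟨C, _, hC⟩ := hk
    exact hC ▸ C.card_le_univ
  have hmem : Aq q n d ∈ K := Nat.sSup_mem hKne hKbdd
  obtain ⟨C, hCmin, hCcard⟩ := hmem
  -- covering property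
  have hcover : ∀ x : Fin n → Fin q, ∃ u ∈ C, hammingDist u x < d := by
    intro x
    by_contra hcon
    push_neg at hcon
    have hxC : x ∉ C := fun hx => by
      have := hcon x hx
      simp [hammingDist_self] at this
      omega
    have hmin' : minDistGE q n d (insert x C) := by
      intro a ha b hb hab
      rcases mem_insert.1 ha with ha' | ha' <;> rcases mem_insert.1 hb with hb' | hb'
      · exact absurd (ha'.trans hb'.symm) hab
      · subst ha'; rw [hammingDist_comm]; exact hcon b hb'
      · subst hb'; exact hcon a ha'
      · exact hCmin a ha' b hb' hab
    have hle : (insert x C).card ≤ Aq q n d :=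
      le_csSup hKbdd ⟨insert x C, hmin', rfl⟩
    rw [Finset.card_insert_of_notMem hxC, hCcard] at hle
    omega
  -- counting
  have hcount : q ^ n ≤ C.card * ∑ i ∈ Finset.range d, n.choose i * (q - 1) ^ i := by
    have hsub : (univ : Finset (Fin n → Fin q)) ⊆
        C.biUnion (fun u => (univ : Finset (Fin n → Fin q)).filter
          fun y => hammingDist u y < d) := by
      intro x _
      obtain ⟨u, hu, hlt⟩ := hcover x
      exact mem_biUnion.2 ⟨u, hu, mem_filter.2 ⟨mem_univ _, hlt⟩⟩
    calc q ^ n = (univ : Finset (Fin n → Fin q)).card := by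
          rw [card_univ]; simp
      _ ≤ _ := card_le_card hsub
      _ ≤ ∑ u ∈ C, ((univ : Finset (Fin n → Fin q)).filter
            fun y => hammingDist u y < d).card := card_biUnion_le
      _ ≤ ∑ _u ∈ C, ∑ i ∈ Finset.range d, n.choose i * (q - 1) ^ i :=
          Finset.sum_le_sum fun u _ => ball_card_le q n d u
      _ = _ := by rw [Finset.sum_const, smul_eq_mul]
  -- real arithmetic
  set V : ℝ := ∑ i ∈ Finset.range d, (n.choose i : ℝ) * ((q : ℝ) - 1) ^ i with hV
  have hVcast : ((∑ i ∈ Finset.range d, n.choose i * (q - 1) ^ i : ℕ) : ℝ) = V := by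
    rw [hV]
    push_cast [Nat.cast_sub (by omega : 1 ≤ q)]
    ring_nf
  have hVpos : 0 < V := by
    rw [hV]
    refine Finset.sum_pos (fun i hi => ?_) ⟨0, mem_range.2 hd1⟩
    have hi' : i ≤ n := le_trans (Nat.le_of_lt_succ (Nat.lt_succ_of_lt (mem_range.1 hi))) hdn
    have h1 : (0:ℝ) < n.choose i := by
      exact_mod_cast Nat.choose_pos hi'
    have h2 : (0:ℝ) < ((q:ℝ) - 1) ^ i := by
      apply pow_pos; have : (2:ℝ) ≤ q := by exact_mod_cast hq
      linarith
    positivity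
  rw [div_le_iff₀ hVpos]
  have : ((q ^ n : ℕ) : ℝ) ≤ ((C.card * ∑ i ∈ Finset.range d, n.choose i * (q - 1) ^ i : ℕ) : ℝ) := by
    exact_mod_cast hcount
  rw [Nat.cast_mul, hVcast, hCcard] at this
  push_cast at this ⊢
  linarith
end

section
/- Let q ≥ 2 and m ≥ 1 be integers and let C ⊆ Q^m be a nonempty code with distance distribution B_0, B_1, …, B_m. Define the polynomial A(z) = (1/|C|)·Σ_{j=0}^m B_j·(1−z)^j·(1+(q−1)z)^{m−j}, and write A(z) = Σ_{i=0}^m A_i z^i. Then A_0 = 1 and A_i ≥ 0 for all 0 ≤ i ≤ m (the Delsarte inequalities); consequently A(z) ≥ 1 for all z ≥ 0. -/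
open Finset Polynomial

/-- The distance distribution of a code: `distDistr q m C j = B_j =
(1/|C|)·|{(u,v) ∈ C×C : d(u,v) = j}|`. -/
noncomputable def distDistr (q m : ℕ) (C : Finset (Fin m → Fin q)) (j : ℕ) : ℝ :=
  (((C ×ˢ C).filter fun p => hammingDist p.1 p.2 = j).card : ℝ) / (C.card : ℝ)

/-- The polynomial `A(z) = (1/|C|)·Σ_{j=0}^m B_j·(1−z)^j·(1+(q−1)z)^{m−j}`. -/
noncomputable def delsartePoly (q m : ℕ) (C : Finset (Fin m → Fin q)) : Polynomial ℝ :=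
  Polynomial.C (C.card : ℝ)⁻¹ *
    ∑ j ∈ Finset.range (m + 1), Polynomial.C (distDistr q m C j) *
      (1 - Polynomial.X) ^ j * (1 + Polynomial.C ((q : ℝ) - 1) * Polynomial.X) ^ (m - j)

open Complex

section chi
variable {q : ℕ} [NeZero q] {ζ : ℂ}

noncomputable def chi (q : ℕ) (ζ : ℂ) (a : ZMod q) : ℂ := ζ ^ a.val

lemma chi_zero : chi q ζ 0 = 1 := by simp [chi, ZMod.val_zero]

lemma pow_val_mod (hζ : ζ ^ q = 1) (k : ℕ) : ζ ^ (k % q) = ζ ^ k := by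
  conv_rhs => rw [← Nat.mod_add_div k q, pow_add, pow_mul, hζ, one_pow, mul_one]

lemma chi_add (hζ : ζ ^ q = 1) (a b : ZMod q) :
    chi q ζ (a + b) = chi q ζ a * chi q ζ b := by
  rw [chi, chi, chi, ZMod.val_add, pow_val_mod hζ, pow_add]

lemma chi_sum (hζ : ζ ^ q = 1) {ι : Type*} (s : Finset ι) (f : ι → ZMod q) :
    chi q ζ (∑ i ∈ s, f i) = ∏ i ∈ s, chi q ζ (f i) := by
  classical
  induction s using Finset.cons_induction with
  | empty => simp [chi_zero]
  | cons i s hi ih => rw [Finset.sum_cons, Finset.prod_cons, chi_add hζ, ih]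

lemma chi_nsmul (hζ : ζ ^ q = 1) (n : ℕ) (a : ZMod q) :
    chi q ζ (n • a) = chi q ζ a ^ n := by
  induction n with
  | zero => simp [chi_zero]
  | succ n ih => rw [succ_nsmul, chi_add hζ, ih, pow_succ]

lemma norm_chi (hζ : ζ ^ q = 1) (a : ZMod q) : ‖chi q ζ a‖ = 1 := by
  have h1 : ‖ζ‖ = 1 := Complex.norm_eq_one_of_pow_eq_one hζ (NeZero.ne q)
  simp [chi, norm_pow, h1]

lemma conj_chi (hζ : ζ ^ q = 1) (a : ZMod q) :
    (starRingEnd ℂ) (chi q ζ a) = chi q ζ (-a) := by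
  have h : chi q ζ a * chi q ζ (-a) = 1 := by rw [← chi_add hζ, add_neg_cancel, chi_zero]
  rw [← Complex.inv_eq_conj (norm_chi hζ a)]
  exact inv_eq_of_mul_eq_one_right h

lemma sum_chi_mul (hζ : IsPrimitiveRoot ζ q) {c : ZMod q} (hc : c ≠ 0) :
    ∑ a : ZMod q, chi q ζ (a * c) = 0 := by
  have hq1 : ζ ^ q = 1 := hζ.pow_eq_one
  have key : ∀ a : ZMod q, chi q ζ (a * c) = chi q ζ c ^ a.val := by
    intro a
    rw [← chi_nsmul hq1, nsmul_eq_mul, ZMod.natCast_val, ZMod.cast_id]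
  simp_rw [key]
  have : ∑ a : ZMod q, chi q ζ c ^ a.val = ∑ k ∈ Finset.range q, chi q ζ c ^ k := by
    apply Finset.sum_nbij' (fun a : ZMod q => a.val) (fun k => (k : ZMod q))
    · intro a _; exact Finset.mem_range.mpr a.val_lt
    · intro k _; exact Finset.mem_univ _
    · intro a _; simp [ZMod.natCast_val, ZMod.cast_id]
    · intro k hk; exact ZMod.val_cast_of_lt (Finset.mem_range.mp hk)
    · intro a _; rfl
  rw [this]
  have hx1 : chi q ζ c ≠ 1 := by
    intro h
    have hd := (hζ.pow_eq_one_iff_dvd c.val).mp h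
    have hlt := c.val_lt
    have hne : c.val ≠ 0 := fun h0 => hc (by rwa [ZMod.val_eq_zero] at h0)
    exact absurd (Nat.le_of_dvd (Nat.pos_of_ne_zero hne) hd) (by omega)
  have hxq : chi q ζ c ^ q = 1 := by
    rw [chi, ← pow_mul, mul_comm, pow_mul, hq1, one_pow]
  rw [geom_sum_eq hx1, hxq, sub_self, zero_div]

lemma coord_sum (hζ : IsPrimitiveRoot ζ q) (z : ℂ) (c : ZMod q) :
    ∑ a : ZMod q, (if a = 0 then 1 else z) * chi q ζ (a * c) =
      if c = 0 then 1 + ((q : ℂ) - 1) * z else 1 - z := by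
  have hq1 : ζ ^ q = 1 := hζ.pow_eq_one
  have split : ∀ a : ZMod q, (if a = 0 then (1:ℂ) else z) =
      z + (if a = 0 then 1 - z else 0) := by
    intro a; split <;> ring
  by_cases hc : c = 0
  · subst hc
    simp only [mul_zero, chi_zero, mul_one, split, Finset.sum_add_distrib,
      Finset.sum_const, Finset.sum_ite_eq' Finset.univ (0 : ZMod q) (fun _ => (1:ℂ) - z),
      Finset.mem_univ, if_true, nsmul_eq_mul]
    rw [Finset.card_univ, ZMod.card]
    ring
  · simp only [if_neg hc, split, add_mul, Finset.sum_add_distrib]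
    rw [← Finset.mul_sum, sum_chi_mul hζ hc, mul_zero]
    have : ∑ a : ZMod q, (if a = 0 then (1:ℂ) - z else 0) * chi q ζ (a * c)
        = (1 - z) * chi q ζ ((0 : ZMod q) * c) := by
      rw [Finset.sum_congr rfl (fun a _ => by rw [ite_mul, zero_mul] :
        ∀ a ∈ Finset.univ, (if a = 0 then (1:ℂ) - z else 0) * chi q ζ (a * c) =
          if a = 0 then (1 - z) * chi q ζ (a * c) else 0)]
      rw [Finset.sum_ite_eq' Finset.univ (0 : ZMod q)
        (fun a => ((1:ℂ) - z) * chi q ζ (a * c)), if_pos (Finset.mem_univ _)]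
    rw [this]
    simp [chi_zero]

lemma pair_sum (hζ : IsPrimitiveRoot ζ q) (m : ℕ) (z : ℂ) (u v : Fin m → ZMod q) :
    ∑ w : Fin m → ZMod q, z ^ hammingNorm w * chi q ζ (∑ k, w k * (u k - v k)) =
      (1 - z) ^ hammingDist u v * (1 + ((q:ℂ) - 1) * z) ^ (m - hammingDist u v) := by
  classical
  have hq1 : ζ ^ q = 1 := hζ.pow_eq_one
  have hwt : ∀ w : Fin m → ZMod q,
      z ^ hammingNorm w = ∏ k, (if w k = 0 then 1 else z) := by
    intro w
    rw [Finset.prod_ite (fun _ => (1:ℂ)) (fun _ => z), Finset.prod_const,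
      Finset.prod_const, one_pow, one_mul, hammingNorm]
  calc ∑ w : Fin m → ZMod q, z ^ hammingNorm w * chi q ζ (∑ k, w k * (u k - v k))
      = ∑ w : Fin m → ZMod q, ∏ k,
          ((if w k = 0 then 1 else z) * chi q ζ (w k * (u k - v k))) := by
        apply Finset.sum_congr rfl
        intro w _
        rw [hwt w, chi_sum hq1, ← Finset.prod_mul_distrib]
    _ = ∏ k, ∑ a : ZMod q, (if a = 0 then 1 else z) * chi q ζ (a * (u k - v k)) := by
        rw [Finset.prod_univ_sum]
        apply Finset.sum_nbij' (fun w => w) (fun w => w)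
        · intro w _; simp [Fintype.mem_piFinset]
        · intro w _; exact Finset.mem_univ _
        · intro w _; rfl
        · intro w _; rfl
        · intro w _; rfl
    _ = ∏ k, (if u k = v k then 1 + ((q:ℂ) - 1) * z else 1 - z) := by
        apply Finset.prod_congr rfl
        intro k _
        rw [coord_sum hζ]
        congr 1
        simp [sub_eq_zero]
    _ = (1 - z) ^ hammingDist u v * (1 + ((q:ℂ) - 1) * z) ^ (m - hammingDist u v) := by
        rw [Finset.prod_ite (fun _ => 1 + ((q:ℂ) - 1) * z) (fun _ => 1 - z),
          Finset.prod_const, Finset.prod_const, mul_comm]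
        have hd : (Finset.univ.filter (fun k => ¬ u k = v k)).card = hammingDist u v := rfl
        have hsum := Finset.card_filter_add_card_filter_not
          (s := (Finset.univ : Finset (Fin m))) (p := fun k => u k = v k)
        simp only [Finset.card_univ, Fintype.card_fin] at hsum
        rw [hd] at hsum
        rw [hd]
        rw [Nat.eq_sub_of_add_eq hsum]

lemma iota_dist {m : ℕ} (u v : Fin m → Fin q) :
    hammingDist (fun k => ((u k : ℕ) : ZMod q)) (fun k => ((v k : ℕ) : ZMod q)) =
      hammingDist u v := by
  have key : ∀ k, (((u k : ℕ) : ZMod q) = ((v k : ℕ) : ZMod q)) ↔ u k = v k := by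
    intro k
    constructor
    · intro h
      have h1 := ZMod.val_cast_of_lt (a := (u k : ℕ)) (u k).isLt
      have h2 := ZMod.val_cast_of_lt (a := (v k : ℕ)) (v k).isLt
      apply Fin.ext
      rw [← h1, ← h2, h]
    · intro h; rw [h]
  unfold hammingDist
  congr 1
  apply Finset.filter_congr
  intro k _
  simp only [ne_eq, key]

lemma code_eval (hζ : IsPrimitiveRoot ζ q) {m : ℕ} (C : Finset (Fin m → Fin q)) (z : ℂ) :
    ∑ p ∈ C ×ˢ C, (1 - z) ^ hammingDist p.1 p.2 *
        (1 + ((q:ℂ) - 1) * z) ^ (m - hammingDist p.1 p.2)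
      = ∑ w : Fin m → ZMod q,
          ((∑ u ∈ C, chi q ζ (∑ k, w k * ((u k : ℕ) : ZMod q))) *
            (starRingEnd ℂ) (∑ u ∈ C, chi q ζ (∑ k, w k * ((u k : ℕ) : ZMod q)))) *
            z ^ hammingNorm w := by
  classical
  have hq1 : ζ ^ q = 1 := hζ.pow_eq_one
  rw [Finset.sum_product]
  have step1 : ∀ u v : Fin m → Fin q,
      (1 - z) ^ hammingDist u v * (1 + ((q:ℂ) - 1) * z) ^ (m - hammingDist u v)
        = ∑ w : Fin m → ZMod q, z ^ hammingNorm w *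
            (chi q ζ (∑ k, w k * ((u k : ℕ) : ZMod q)) *
              chi q ζ (-∑ k, w k * ((v k : ℕ) : ZMod q))) := by
    intro u v
    rw [← iota_dist u v,
      ← pair_sum hζ m z (fun k => ((u k : ℕ) : ZMod q)) (fun k => ((v k : ℕ) : ZMod q))]
    apply Finset.sum_congr rfl
    intro w _
    congr 1
    rw [← chi_add hq1, ← sub_eq_add_neg, ← Finset.sum_sub_distrib]
    congr 1
    apply Finset.sum_congr rfl
    intro k _
    ring
  have swap : ∀ f : (Fin m → Fin q) → (Fin m → Fin q) → (Fin m → ZMod q) → ℂ,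
      ∑ u ∈ C, ∑ v ∈ C, ∑ w : Fin m → ZMod q, f u v w
        = ∑ w : Fin m → ZMod q, ∑ u ∈ C, ∑ v ∈ C, f u v w := by
    intro f
    calc ∑ u ∈ C, ∑ v ∈ C, ∑ w : Fin m → ZMod q, f u v w
        = ∑ u ∈ C, ∑ w : Fin m → ZMod q, ∑ v ∈ C, f u v w :=
          Finset.sum_congr rfl fun u _ => Finset.sum_comm
      _ = ∑ w : Fin m → ZMod q, ∑ u ∈ C, ∑ v ∈ C, f u v w := Finset.sum_comm
  simp_rw [step1]
  rw [swap]
  apply Finset.sum_congr rfl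
  intro w _
  rw [map_sum]
  simp_rw [conj_chi hq1]
  rw [Finset.sum_mul_sum, Finset.sum_mul]
  apply Finset.sum_congr rfl
  intro u _
  rw [Finset.sum_mul]
  apply Finset.sum_congr rfl
  intro v _
  ring

lemma code_poly (hζ : IsPrimitiveRoot ζ q) {m : ℕ} (C : Finset (Fin m → Fin q)) :
    ∑ p ∈ C ×ˢ C, (1 - Polynomial.X) ^ hammingDist p.1 p.2 *
        (1 + Polynomial.C ((q:ℂ) - 1) * Polynomial.X) ^ (m - hammingDist p.1 p.2)
      = ∑ w : Fin m → ZMod q,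
          Polynomial.C ((∑ u ∈ C, chi q ζ (∑ k, w k * ((u k : ℕ) : ZMod q))) *
            (starRingEnd ℂ) (∑ u ∈ C, chi q ζ (∑ k, w k * ((u k : ℕ) : ZMod q)))) *
            Polynomial.X ^ hammingNorm w := by
  apply Polynomial.funext
  intro z
  simp only [eval_finset_sum, eval_mul, eval_pow, eval_sub, eval_add, eval_one, eval_C, eval_X]
  exact code_eval hζ C z

lemma code_poly_coeff (hζ : IsPrimitiveRoot ζ q) {m : ℕ} (C : Finset (Fin m → Fin q)) (i : ℕ) :
    (∑ p ∈ C ×ˢ C, (1 - Polynomial.X) ^ hammingDist p.1 p.2 *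
        (1 + Polynomial.C ((q:ℂ) - 1) * Polynomial.X) ^ (m - hammingDist p.1 p.2)).coeff i
      = ((∑ w : Fin m → ZMod q, if hammingNorm w = i then
          Complex.normSq (∑ u ∈ C, chi q ζ (∑ k, w k * ((u k : ℕ) : ZMod q))) else 0 : ℝ) : ℂ) := by
  classical
  rw [code_poly hζ C]
  rw [Polynomial.finset_sum_coeff]
  push_cast
  apply Finset.sum_congr rfl
  intro w _
  rw [Polynomial.coeff_C_mul, Polynomial.coeff_X_pow, Complex.mul_conj]
  by_cases h : hammingNorm w = i
  · simp [h]
  · rw [if_neg h, if_neg (fun hh => h hh.symm)]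
    simp

end chi

section main
variable {q : ℕ} [NeZero q] {ζ : ℂ}

lemma delsarte_eq {m : ℕ} (C : Finset (Fin m → Fin q)) (hC : C.Nonempty) :
    delsartePoly q m C = Polynomial.C (((C.card : ℝ) ^ 2)⁻¹) *
      ∑ p ∈ C ×ˢ C, (1 - Polynomial.X) ^ hammingDist p.1 p.2 *
        (1 + Polynomial.C ((q:ℝ) - 1) * Polynomial.X) ^ (m - hammingDist p.1 p.2) := by
  classical
  have hc0 : (C.card : ℝ) ≠ 0 := Nat.cast_ne_zero.mpr (Finset.card_pos.mpr hC).ne'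
  rw [delsartePoly]
  have hfib := Finset.sum_fiberwise_of_maps_to
    (g := fun p : (Fin m → Fin q) × (Fin m → Fin q) => hammingDist p.1 p.2)
    (t := Finset.range (m + 1)) (s := C ×ˢ C)
    (f := fun p => (1 - Polynomial.X) ^ hammingDist p.1 p.2 *
      (1 + Polynomial.C ((q:ℝ) - 1) * Polynomial.X) ^ (m - hammingDist p.1 p.2))
    (fun p _ => Finset.mem_range.mpr (Nat.lt_succ_of_le
      (le_trans hammingDist_le_card_fintype (by simp))))
  rw [← hfib, Finset.mul_sum, Finset.mul_sum]
  apply Finset.sum_congr rfl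
  intro j hj
  have hinner : ∑ p ∈ (C ×ˢ C).filter (fun p => hammingDist p.1 p.2 = j),
      (1 - Polynomial.X) ^ hammingDist p.1 p.2 *
        (1 + Polynomial.C ((q:ℝ) - 1) * Polynomial.X) ^ (m - hammingDist p.1 p.2)
      = ((C ×ˢ C).filter (fun p => hammingDist p.1 p.2 = j)).card •
        ((1 - Polynomial.X) ^ j *
          (1 + Polynomial.C ((q:ℝ) - 1) * Polynomial.X) ^ (m - j)) := by
    rw [Finset.sum_congr rfl (fun p hp => by
      rw [(Finset.mem_filter.mp hp).2] :
      ∀ p ∈ (C ×ˢ C).filter (fun p => hammingDist p.1 p.2 = j),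
        (1 - Polynomial.X) ^ hammingDist p.1 p.2 *
          (1 + Polynomial.C ((q:ℝ) - 1) * Polynomial.X) ^ (m - hammingDist p.1 p.2)
        = (1 - Polynomial.X) ^ j *
          (1 + Polynomial.C ((q:ℝ) - 1) * Polynomial.X) ^ (m - j))]
    rw [Finset.sum_const]
  rw [hinner, nsmul_eq_mul, distDistr]
  set N : ℝ := (((C ×ˢ C).filter (fun p => hammingDist p.1 p.2 = j)).card : ℝ) with hN
  have hcast : ((((C ×ˢ C).filter (fun p => hammingDist p.1 p.2 = j)).card : ℝ[X])) =
      Polynomial.C N := by rw [hN]; simp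
  rw [hcast]
  have hconst : (C.card : ℝ)⁻¹ * (N / C.card) = ((C.card : ℝ) ^ 2)⁻¹ * N := by
    rw [div_eq_mul_inv, pow_two, mul_inv]; ring
  calc Polynomial.C (C.card : ℝ)⁻¹ * (Polynomial.C (N / C.card) * (1 - Polynomial.X) ^ j *
          (1 + Polynomial.C ((q:ℝ) - 1) * Polynomial.X) ^ (m - j))
      = Polynomial.C ((C.card : ℝ)⁻¹ * (N / C.card)) * ((1 - Polynomial.X) ^ j *
          (1 + Polynomial.C ((q:ℝ) - 1) * Polynomial.X) ^ (m - j)) := by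
        rw [Polynomial.C_mul, mul_assoc, mul_assoc]
    _ = Polynomial.C (((C.card : ℝ) ^ 2)⁻¹) * (Polynomial.C N * ((1 - Polynomial.X) ^ j *
          (1 + Polynomial.C ((q:ℝ) - 1) * Polynomial.X) ^ (m - j))) := by
        rw [hconst, Polynomial.C_mul, mul_assoc]

lemma delsarte_coeff_zero {m : ℕ} (C : Finset (Fin m → Fin q)) (hC : C.Nonempty) :
    (delsartePoly q m C).coeff 0 = 1 := by
  classical
  have hc0 : (C.card : ℝ) ≠ 0 := Nat.cast_ne_zero.mpr (Finset.card_pos.mpr hC).ne'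
  rw [Polynomial.coeff_zero_eq_eval_zero, delsarte_eq C hC]
  simp only [eval_mul, eval_C, eval_finset_sum, eval_pow, eval_sub, eval_add, eval_one,
    eval_X, mul_zero, sub_zero, one_pow, mul_one, Finset.sum_const, Finset.card_product,
    nsmul_eq_mul, Nat.cast_mul]
  field_simp
  simp [Finset.card_product, sq]

lemma delsarte_natDegree {m : ℕ} (C : Finset (Fin m → Fin q)) (hC : C.Nonempty) :
    (delsartePoly q m C).natDegree ≤ m := by
  classical
  rw [delsarte_eq C hC]
  refine le_trans (Polynomial.natDegree_C_mul_le _ _) ?_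
  apply Polynomial.natDegree_sum_le_of_forall_le
  intro p _
  refine le_trans (Polynomial.natDegree_mul_le) ?_
  have h1 : ((1 - Polynomial.X : ℝ[X]) ^ hammingDist p.1 p.2).natDegree ≤
      hammingDist p.1 p.2 := by
    refine le_trans (Polynomial.natDegree_pow_le) ?_
    have : (1 - Polynomial.X : ℝ[X]).natDegree ≤ 1 := by
      refine le_trans (Polynomial.natDegree_sub_le _ _) ?_
      simp
    nlinarith [this]
  have h2 : ((1 + Polynomial.C ((q:ℝ) - 1) * Polynomial.X) ^
      (m - hammingDist p.1 p.2)).natDegree ≤ m - hammingDist p.1 p.2 := by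
    refine le_trans (Polynomial.natDegree_pow_le) ?_
    have : (1 + Polynomial.C ((q:ℝ) - 1) * Polynomial.X).natDegree ≤ 1 := by
      refine le_trans (Polynomial.natDegree_add_le _ _) ?_
      simp only [Polynomial.natDegree_one, max_le_iff]
      exact ⟨Nat.zero_le _, le_trans (Polynomial.natDegree_C_mul_le _ _)
        Polynomial.natDegree_X_le⟩
    nlinarith [this]
  have hd : hammingDist p.1 p.2 ≤ m := by
    refine le_trans hammingDist_le_card_fintype ?_
    simp
  omega

lemma delsarte_coeff_nonneg {m : ℕ} (hζ : IsPrimitiveRoot ζ q)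
    (C : Finset (Fin m → Fin q)) (hC : C.Nonempty) (i : ℕ) :
    0 ≤ (delsartePoly q m C).coeff i := by
  classical
  rw [delsarte_eq C hC, Polynomial.coeff_C_mul]
  apply mul_nonneg (by positivity)
  set R : ℝ[X] := ∑ p ∈ C ×ˢ C, (1 - Polynomial.X) ^ hammingDist p.1 p.2 *
    (1 + Polynomial.C ((q:ℝ) - 1) * Polynomial.X) ^ (m - hammingDist p.1 p.2) with hR
  have hmap : R.map (algebraMap ℝ ℂ)
      = ∑ p ∈ C ×ˢ C, (1 - Polynomial.X) ^ hammingDist p.1 p.2 *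
        (1 + Polynomial.C ((q:ℂ) - 1) * Polynomial.X) ^ (m - hammingDist p.1 p.2) := by
    rw [hR, Polynomial.map_sum]
    apply Finset.sum_congr rfl
    intro p _
    simp only [Polynomial.map_mul, Polynomial.map_pow, Polynomial.map_sub,
      Polynomial.map_add, Polynomial.map_one, Polynomial.map_C, Polynomial.map_X]
    norm_num
  have hco : ((R.coeff i : ℝ) : ℂ)
      = ((∑ w : Fin m → ZMod q, if hammingNorm w = i then
          Complex.normSq (∑ u ∈ C, chi q ζ (∑ k, w k * ((u k : ℕ) : ZMod q))) else 0 : ℝ) : ℂ) := by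
    rw [← code_poly_coeff hζ C i, ← hmap, Polynomial.coeff_map]
    rfl
  have hreal : R.coeff i = ∑ w : Fin m → ZMod q, if hammingNorm w = i then
      Complex.normSq (∑ u ∈ C, chi q ζ (∑ k, w k * ((u k : ℕ) : ZMod q))) else 0 :=
    Complex.ofReal_injective hco
  rw [hreal]
  apply Finset.sum_nonneg
  intro w _
  split
  · exact Complex.normSq_nonneg _
  · exact le_refl 0

end main

/-- The Delsarte inequalities: writing `A(z) = Σ_i A_i z^i`, one has `A_0 = 1` and
`A_i ≥ 0` for all `0 ≤ i ≤ m`; consequently `A(z) ≥ 1` for all `z ≥ 0`. -/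
theorem delsarte_inequalities (q m : ℕ) (hq : 2 ≤ q) (hm : 1 ≤ m)
    (C : Finset (Fin m → Fin q)) (hC : C.Nonempty) :
    (delsartePoly q m C).coeff 0 = 1 ∧
      (∀ i ≤ m, 0 ≤ (delsartePoly q m C).coeff i) ∧
      (∀ z : ℝ, 0 ≤ z → 1 ≤ (delsartePoly q m C).eval z) := by
  haveI : NeZero q := ⟨by omega⟩
  have hζ : IsPrimitiveRoot (Complex.exp (2 * Real.pi * Complex.I / q)) q :=
    Complex.isPrimitiveRoot_exp q (by omega)
  refine ⟨delsarte_coeff_zero C hC, fun i _ => delsarte_coeff_nonneg hζ C hC i, ?_⟩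
  intro z hz
  have hdeg : (delsartePoly q m C).natDegree < m + 1 :=
    Nat.lt_succ_of_le (delsarte_natDegree C hC)
  rw [Polynomial.eval_eq_sum_range' hdeg, Finset.sum_range_succ']
  simp only [pow_zero, mul_one, delsarte_coeff_zero C hC]
  have hnn : 0 ≤ ∑ i ∈ Finset.range m, (delsartePoly q m C).coeff (i + 1) * z ^ (i + 1) := by
    apply Finset.sum_nonneg
    intro i _
    exact mul_nonneg (delsarte_coeff_nonneg hζ C hC _) (pow_nonneg hz _)
  linarith
end
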